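/- arXiv:math/0410616 — 4 statements merged into one kernel-verified Lean document; each statement's English description precedes it below -/
import Mathlib

section
/- In the lamplighter group L₂ = ℤ₂ ≀ ℤ with generating set {a, t}, for n ≥ 1 the element g_n = (t^n a t^{-n})(t^{-n} a t^{n}) has exactly two geodesic representatives: t^n a t^{-2n} a t^n and t^{-n} a t^{2n} a t^{-n}. -/
open scoped commutatorElement

/-- Relators for the lamplighter group `L_m = ℤ_m ≀ ℤ` in the wreath product
presentation `⟨a, t | a^m, [t^i a t^{-i}, t^j a t^{-j}]⟩`, where `a` is encoded
by `true` and `t` by `false`. -/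
def lampRels (m : ℕ) : Set (FreeGroup Bool) :=
  {FreeGroup.of true ^ m} ∪
  {r | ∃ i j : ℤ,
    r = ⁅FreeGroup.of false ^ i * FreeGroup.of true * FreeGroup.of false ^ (-i),
        FreeGroup.of false ^ j * FreeGroup.of true * FreeGroup.of false ^ (-j)⁆}

/-- The lamplighter group `L_m = ℤ_m ≀ ℤ`. -/
abbrev Lamp (m : ℕ) := PresentedGroup (lampRels m)

/-- The generator `a` of `L_m`. -/
noncomputable def la (m : ℕ) : Lamp m := PresentedGroup.of true

/-- The generator `t` of `L_m`. -/
noncomputable def lt (m : ℕ) : Lamp m := PresentedGroup.of false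

/-- Word length of `g` with respect to the generating set `S` (and inverses):
the least length of a list of elements of `S ∪ S⁻¹` with product `g`. -/
noncomputable def wordLength {G : Type*} [Group G] (S : Set G) (g : G) : ℕ :=
  sInf {n | ∃ l : List G, (∀ x ∈ l, x ∈ S ∨ x⁻¹ ∈ S) ∧ l.length = n ∧ l.prod = g}


namespace LampAux

@[ext] structure LL : Type where
  f : ℤ → ZMod 2
  p : ℤ

instance : One LL := ⟨⟨0, 0⟩⟩
instance : Mul LL := ⟨fun x y => ⟨fun i => x.f i + y.f (i - x.p), x.p + y.p⟩⟩
instance : Inv LL := ⟨fun x => ⟨fun i => x.f (i + x.p), -x.p⟩⟩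

@[simp] lemma one_f (i : ℤ) : (1 : LL).f i = 0 := rfl
@[simp] lemma one_p : (1 : LL).p = 0 := rfl
@[simp] lemma mul_f (x y : LL) (i : ℤ) : (x*y).f i = x.f i + y.f (i - x.p) := rfl
@[simp] lemma mul_p (x y : LL) : (x*y).p = x.p + y.p := rfl
@[simp] lemma inv_f (x : LL) (i : ℤ) : (x⁻¹).f i = x.f (i + x.p) := rfl
@[simp] lemma inv_p (x : LL) : (x⁻¹).p = -x.p := rfl

lemma z2 : ∀ z : ZMod 2, z + z = 0 := by decide

instance : Group LL where
  mul_assoc x y z := by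
    ext i
    · simp [sub_sub, add_assoc]
    · simp [add_assoc]
  one_mul x := by ext i <;> simp
  mul_one x := by ext i <;> simp
  inv_mul_cancel x := by
    ext i
    · simp [z2]
    · simp

def A : LL := ⟨fun i => if i = 0 then 1 else 0, 0⟩
def T : LL := ⟨0, 1⟩

@[simp] lemma A_f (i : ℤ) : A.f i = if i = 0 then 1 else 0 := rfl
@[simp] lemma A_p : A.p = 0 := rfl
@[simp] lemma T_f (i : ℤ) : T.f i = 0 := rfl
@[simp] lemma T_p : T.p = 1 := rfl

lemma T_pow (m : ℕ) : T ^ m = ⟨0, m⟩ := by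
  induction m with
  | zero => rfl
  | succ k ih => ext i <;> simp [pow_succ, ih, Pi.zero_apply]

lemma T_zpow (k : ℤ) : T ^ k = ⟨0, k⟩ := by
  cases k with
  | ofNat m => simpa using T_pow m
  | negSucc m =>
    rw [zpow_negSucc, T_pow]
    ext i <;> simp [Pi.zero_apply, Int.negSucc_eq]

lemma A_mul_A : A * A = 1 := by
  ext i
  · by_cases h : i = 0 <;> simp [h, z2]
  · simp

lemma Lk (k : ℤ) : T ^ k * A * T ^ (-k) = ⟨fun i => if i = k then 1 else 0, 0⟩ := by
  rw [T_zpow, T_zpow]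
  ext i
  · simp [sub_eq_zero]
  · simp

lemma comm_p0 (x y : LL) (hx : x.p = 0) (hy : y.p = 0) : x * y = y * x := by
  ext i
  · simp [hx, hy, add_comm]
  · simp [hx, hy, add_comm]

/-! ### words -/

def letL : Option Bool → LL
  | none => A
  | some true => T
  | some false => T⁻¹

def dir : Option Bool → ℤ
  | none => 0
  | some true => 1
  | some false => -1

@[simp] lemma dir_none : dir none = 0 := rfl
@[simp] lemma dir_true : dir (some true) = 1 := rfl
@[simp] lemma dir_false : dir (some false) = -1 := rfl

@[simp] lemma letL_p (o : Option Bool) : (letL o).p = dir o := by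
  cases o with
  | none => rfl
  | some b => cases b <;> rfl

def ev (c : List (Option Bool)) : LL := (c.map letL).prod

def pos (c : List (Option Bool)) : ℤ := (c.map dir).sum

@[simp] lemma ev_nil : ev [] = 1 := rfl
@[simp] lemma ev_cons (x : Option Bool) (c : List (Option Bool)) :
    ev (x :: c) = letL x * ev c := by simp [ev]

@[simp] lemma pos_nil : pos [] = 0 := rfl
@[simp] lemma pos_cons (x : Option Bool) (c : List (Option Bool)) :
    pos (x :: c) = dir x + pos c := by simp [pos]

lemma pos_append (c d : List (Option Bool)) : pos (c ++ d) = pos c + pos d := by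
  simp [pos]

lemma ev_p (c : List (Option Bool)) : (ev c).p = pos c := by
  induction c with
  | nil => rfl
  | cons x c ih => simp [ih]

lemma dir_le (o : Option Bool) : dir o ≤ 1 := by cases o with
  | none => simp [dir]
  | some b => cases b <;> simp [dir]

lemma neg_one_le_dir (o : Option Bool) : -1 ≤ dir o := by cases o with
  | none => simp [dir]
  | some b => cases b <;> simp [dir]

lemma pos_le_length (c : List (Option Bool)) : pos c ≤ c.length := by
  induction c with
  | nil => simp
  | cons x c ih =>
    have := dir_le x
    simp only [pos_cons, List.length_cons]
    push_cast
    omega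

lemma neg_length_le_pos (c : List (Option Bool)) : -(c.length : ℤ) ≤ pos c := by
  induction c with
  | nil => simp
  | cons x c ih =>
    have := neg_one_le_dir x
    simp only [pos_cons, List.length_cons]
    push_cast
    omega

lemma eq_replicate_true (c : List (Option Bool)) (h : pos c = c.length) :
    c = List.replicate c.length (some true) := by
  induction c with
  | nil => simp
  | cons x c ih =>
    have h1 := pos_le_length c
    have h2 := dir_le x
    simp only [pos_cons, List.length_cons] at h
    push_cast at h
    have hx : dir x = 1 := by omega
    have hc : pos c = c.length := by omega
    have : x = some true := by
      cases x with
      | none => simp [dir] at hx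
      | some b => cases b <;> simp [dir] at hx ⊢
    subst this
    rw [List.length_cons, List.replicate_succ]
    exact congrArg _ (ih hc)

lemma eq_replicate_false (c : List (Option Bool)) (h : pos c = -(c.length : ℤ)) :
    c = List.replicate c.length (some false) := by
  induction c with
  | nil => simp
  | cons x c ih =>
    have h1 := neg_length_le_pos c
    have h2 := neg_one_le_dir x
    simp only [pos_cons, List.length_cons] at h
    push_cast at h
    have hx : dir x = -1 := by omega
    have hc : pos c = -(c.length : ℤ) := by omega
    have : x = some false := by
      cases x with
      | none => simp [dir] at hx
      | some b => cases b <;> simp [dir] at hx ⊢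
    subst this
    rw [List.length_cons, List.replicate_succ]
    exact congrArg _ (ih hc)

lemma existsA (c : List (Option Bool)) (k : ℤ) (h : (ev c).f k ≠ 0) :
    ∃ u v, c = u ++ none :: v ∧ pos u = k := by
  induction c generalizing k with
  | nil => simp at h
  | cons x c ih =>
    rw [ev_cons] at h
    cases x with
    | none =>
      by_cases hk : k = 0
      · exact ⟨[], c, by simp, by simp [hk]⟩
      · have : (ev c).f k ≠ 0 := by
          simpa [letL, hk] using h
        obtain ⟨u, v, rfl, hu⟩ := ih k this
        exact ⟨none :: u, v, rfl, by simp [dir, hu]⟩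
    | some b =>
      have : (ev c).f (k - dir (some b)) ≠ 0 := by
        cases b <;> simpa [letL, dir] using h
      obtain ⟨u, v, rfl, hu⟩ := ih _ this
      exact ⟨some b :: u, v, rfl, by simp [hu]⟩


def W1e (n : ℕ) : List (Option Bool) :=
  List.replicate n (some true) ++ none ::
    (List.replicate (2*n) (some false) ++ none :: List.replicate n (some true))

def W2e (n : ℕ) : List (Option Bool) :=
  List.replicate n (some false) ++ none ::
    (List.replicate (2*n) (some true) ++ none :: List.replicate n (some false))

lemma pos_replicate (m : ℕ) (o : Option Bool) :
    pos (List.replicate m o) = m * dir o := by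
  simp [pos, List.map_replicate, List.sum_replicate, mul_comm]

/-- two distinct splits, ordered -/
lemma two_splits {c u1 v1 u2 v2 : List (Option Bool)}
    (h1 : c = u1 ++ none :: v1) (h2 : c = u2 ++ none :: v2)
    (hlt : u1.length < u2.length) :
    ∃ w, u2 = u1 ++ none :: w := by
  have hp1 : (u1 ++ [none]) <+: c := ⟨v1, by simp [h1]⟩
  have hp2 : u2 <+: c := ⟨none :: v2, by simp [h2]⟩
  have hle : (u1 ++ [none]).length ≤ u2.length := by simp; omega
  obtain ⟨w, hw⟩ := List.prefix_of_prefix_length_le hp1 hp2 hle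
  exact ⟨w, by simp [← hw]⟩

/-- the target element: lamps at n and -n, cursor home -/
def tgt (n : ℕ) : LL := ⟨fun i => if i = (n : ℤ) ∨ i = -(n : ℤ) then 1 else 0, 0⟩

lemma main_split (n : ℕ) (hn : 1 ≤ n) (c : List (Option Bool)) (h : ev c = tgt n) :
    ∃ d1 d2 d3 : List (Option Bool),
      c = d1 ++ none :: (d2 ++ none :: d3) ∧ pos c = 0 ∧
      ((pos d1 = n ∧ pos d2 = -(2*n : ℤ) ∧ pos d3 = n) ∨
       (pos d1 = -(n:ℤ) ∧ pos d2 = (2*n : ℤ) ∧ pos d3 = -(n:ℤ))) := by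
  have hne : (n : ℤ) ≠ -(n : ℤ) := by omega
  have hp0 : pos c = 0 := by rw [← ev_p, h]; rfl
  have hfn : (ev c).f n ≠ 0 := by rw [h]; simp [tgt]
  have hfm : (ev c).f (-(n:ℤ)) ≠ 0 := by rw [h]; simp [tgt]
  obtain ⟨u1, v1, hc1, hu1⟩ := existsA c _ hfn
  obtain ⟨u2, v2, hc2, hu2⟩ := existsA c _ hfm
  have hlen : u1.length ≠ u2.length := by
    intro he
    have := List.append_inj (hc1.symm.trans hc2) he
    rw [this.1] at hu1
    omega
  rcases lt_or_gt_of_ne hlen with hlt | hlt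
  · obtain ⟨w, hw⟩ := two_splits hc1 hc2 hlt
    refine ⟨u1, w, v2, by rw [hc2, hw]; simp, hp0, Or.inl ⟨hu1, ?_, ?_⟩⟩
    · have : pos u2 = pos u1 + pos w := by
        rw [hw, pos_append]; simp
      omega
    · have : pos c = pos u2 + pos v2 := by rw [hc2, pos_append]; simp
      have h2 : pos u2 = pos u1 + pos w := by rw [hw, pos_append]; simp
      omega
  · obtain ⟨w, hw⟩ := two_splits hc2 hc1 hlt
    refine ⟨u2, w, v1, by rw [hc1, hw]; simp, hp0, Or.inr ⟨hu2, ?_, ?_⟩⟩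
    · have : pos u1 = pos u2 + pos w := by rw [hw, pos_append]; simp
      omega
    · have : pos c = pos u1 + pos v1 := by rw [hc1, pos_append]; simp
      have h2 : pos u1 = pos u2 + pos w := by rw [hw, pos_append]; simp
      omega

lemma main (n : ℕ) (hn : 1 ≤ n) (c : List (Option Bool)) (h : ev c = tgt n) :
    4*n+2 ≤ c.length ∧ (c.length = 4*n+2 → c = W1e n ∨ c = W2e n) := by
  obtain ⟨d1, d2, d3, hc, hp0, hcase⟩ := main_split n hn c h
  have hlen : c.length = d1.length + d2.length + d3.length + 2 := by
    rw [hc]; simp; omega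
  have b1u := pos_le_length d1
  have b1l := neg_length_le_pos d1
  have b2u := pos_le_length d2
  have b2l := neg_length_le_pos d2
  have b3u := pos_le_length d3
  have b3l := neg_length_le_pos d3
  rcases hcase with ⟨p1, p2, p3⟩ | ⟨p1, p2, p3⟩
  · constructor
    · omega
    · intro hL
      left
      have l1 : d1.length = n := by omega
      have l2 : d2.length = 2*n := by omega
      have l3 : d3.length = n := by omega
      have e1 := eq_replicate_true d1 (by omega)
      have e2 := eq_replicate_false d2 (by omega)
      have e3 := eq_replicate_true d3 (by omega)
      rw [hc, e1, e2, e3, l1, l2, l3, W1e]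
  · constructor
    · omega
    · intro hL
      right
      have l1 : d1.length = n := by omega
      have l2 : d2.length = 2*n := by omega
      have l3 : d3.length = n := by omega
      have e1 := eq_replicate_false d1 (by omega)
      have e2 := eq_replicate_true d2 (by omega)
      have e3 := eq_replicate_false d3 (by omega)
      rw [hc, e1, e2, e3, l1, l2, l3, W2e]


/-! ### the homomorphism from the presented group -/

noncomputable def gens : Bool → LL
  | true => A
  | false => T

@[simp] lemma gens_true : gens true = A := rfl
@[simp] lemma gens_false : gens false = T := rfl

lemma rels_hold : ∀ r ∈ lampRels 2, FreeGroup.lift gens r = 1 := by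
  intro r hr
  rcases hr with hr | ⟨i, j, rfl⟩
  · rw [Set.mem_singleton_iff] at hr
    subst hr
    simp only [map_pow, FreeGroup.lift_apply_of, gens_true]
    rw [pow_two, A_mul_A]
  · rw [map_commutatorElement]
    rw [commutatorElement_eq_one_iff_mul_comm]
    simp only [map_mul, map_zpow, FreeGroup.lift_apply_of, gens_true, gens_false]
    rw [Lk i, Lk j]
    exact comm_p0 _ _ rfl rfl

noncomputable def phi : Lamp 2 →* LL := PresentedGroup.toGroup rels_hold

@[simp] lemma phi_a : phi (la 2) = A := by
  simp [phi, la, PresentedGroup.toGroup.of, gens]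

@[simp] lemma phi_t : phi (lt 2) = T := by
  simp [phi, lt, PresentedGroup.toGroup.of, gens]

noncomputable def letG : Option Bool → Lamp 2
  | none => la 2
  | some true => lt 2
  | some false => (lt 2)⁻¹

lemma phi_letG (o : Option Bool) : phi (letG o) = letL o := by
  cases o with
  | none => simp [letG, letL]
  | some b => cases b <;> simp [letG, letL]

lemma letG_injective : Function.Injective letG := by
  intro o1 o2 h
  have h2 : letL o1 = letL o2 := by rw [← phi_letG, ← phi_letG, h]
  cases o1 with
  | none => cases o2 with
    | none => rfl
    | some b =>
      exfalso; cases b <;>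
        simpa [letL, A, T, LL.ext_iff, funext_iff] using congrArg (fun x => x.f 0) h2
  | some b1 => cases o2 with
    | none =>
      exfalso; cases b1 <;>
        simpa [letL, A, T, LL.ext_iff, funext_iff] using congrArg (fun x => x.f 0) h2
    | some b2 =>
      cases b1 <;> cases b2 <;> first
        | rfl
        | (exfalso; simpa [letL, A, T] using congrArg (fun x => x.p) h2)

lemma phi_prod (c : List (Option Bool)) : phi ((c.map letG).prod) = ev c := by
  induction c with
  | nil => simp
  | cons o c ih => simp [ih, phi_letG]

lemma encode (l : List (Lamp 2)) (hl : ∀ x ∈ l, x ∈ ({la 2, lt 2} : Set (Lamp 2)) ∨ x⁻¹ ∈ ({la 2, lt 2} : Set (Lamp 2))) :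
    ∃ c : List (Option Bool), l = c.map letG := by
  have ha2 : la 2 * la 2 = 1 := by
    have hmem : FreeGroup.of true ^ 2 ∈ Subgroup.normalClosure (lampRels 2) :=
      Subgroup.subset_normalClosure (Or.inl rfl)
    have : (PresentedGroup.mk (lampRels 2)) (FreeGroup.of true ^ 2) = 1 :=
      (QuotientGroup.eq_one_iff _).mpr hmem
    rw [map_pow, pow_two] at this
    exact this
  induction l with
  | nil => exact ⟨[], rfl⟩
  | cons x l ih =>
    obtain ⟨c, hc⟩ := ih (fun y hy => hl y (List.mem_cons_of_mem _ hy))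
    have hx := hl x List.mem_cons_self
    have : ∃ o, x = letG o := by
      rcases hx with (h | h) | (h | h)
      · exact ⟨none, h⟩
      · exact ⟨some true, h⟩
      · refine ⟨none, ?_⟩
        have hxa : x = (la 2)⁻¹ := by rw [← h, inv_inv]
        have hinv : (la 2)⁻¹ = la 2 := inv_eq_of_mul_eq_one_right ha2
        rw [hxa, hinv]
        rfl
      · exact ⟨some false, by rw [letG, ← h, inv_inv]⟩
    obtain ⟨o, rfl⟩ := this
    exact ⟨o :: c, by rw [List.map_cons, ← hc]⟩

@[simp] lemma letG_none : letG none = la 2 := rfl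
@[simp] lemma letG_st : letG (some true) = lt 2 := rfl
@[simp] lemma letG_sf : letG (some false) = (lt 2)⁻¹ := rfl

lemma lamp_comm (i j : ℤ) :
    ((lt 2)^i * la 2 * (lt 2)^(-i)) * ((lt 2)^j * la 2 * (lt 2)^(-j)) =
    ((lt 2)^j * la 2 * (lt 2)^(-j)) * ((lt 2)^i * la 2 * (lt 2)^(-i)) := by
  have hmem : ⁅FreeGroup.of false ^ i * FreeGroup.of true * FreeGroup.of false ^ (-i),
      FreeGroup.of false ^ j * FreeGroup.of true * FreeGroup.of false ^ (-j)⁆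
      ∈ Subgroup.normalClosure (lampRels 2) :=
    Subgroup.subset_normalClosure (Or.inr ⟨i, j, rfl⟩)
  have h1 : (PresentedGroup.mk (lampRels 2))
      ⁅FreeGroup.of false ^ i * FreeGroup.of true * FreeGroup.of false ^ (-i),
       FreeGroup.of false ^ j * FreeGroup.of true * FreeGroup.of false ^ (-j)⁆ = 1 :=
    (QuotientGroup.eq_one_iff _).mpr hmem
  rw [map_commutatorElement, commutatorElement_eq_one_iff_mul_comm] at h1
  simp only [map_mul, map_zpow] at h1
  exact h1

lemma X_mul_Y (n : ℕ) (hn : 1 ≤ n) :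
    (⟨fun i => if i = (n:ℤ) then 1 else 0, 0⟩ : LL) *
      ⟨fun i => if i = -(n:ℤ) then 1 else 0, 0⟩ = tgt n := by
  have hne : ((n:ℤ)) ≠ -(n:ℤ) := by omega
  ext i
  · simp only [mul_f, tgt, sub_zero]
    by_cases h1 : i = (n:ℤ) <;> by_cases h2 : i = -(n:ℤ) <;>
      simp [h1, h2] <;> omega
  · simp [tgt]

/-- the element gₙ -/
noncomputable def gL (n : ℕ) : Lamp 2 :=
  (lt 2)^n * la 2 * ((lt 2)^n)⁻¹ * (((lt 2)^n)⁻¹ * la 2 * (lt 2)^n)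

lemma phi_g (n : ℕ) (hn : 1 ≤ n) : phi (gL n) = tgt n := by
  rw [gL]
  simp only [map_mul, map_pow, map_inv, phi_a, phi_t]
  rw [← zpow_natCast T n, ← zpow_neg, Lk]
  have h2 : T ^ (-(n:ℤ)) * A * T ^ ((n:ℤ)) =
      ⟨fun i => if i = -(n:ℤ) then 1 else 0, 0⟩ := by
    have := Lk (-(n:ℤ)); rwa [neg_neg] at this
  rw [h2]
  exact X_mul_Y n hn

noncomputable def w1L (n : ℕ) : List (Lamp 2) :=
  List.replicate n (lt 2) ++ [la 2] ++ List.replicate (2*n) (lt 2)⁻¹ ++ [la 2] ++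
    List.replicate n (lt 2)

noncomputable def w2L (n : ℕ) : List (Lamp 2) :=
  List.replicate n (lt 2)⁻¹ ++ [la 2] ++ List.replicate (2*n) (lt 2) ++ [la 2] ++
    List.replicate n (lt 2)⁻¹

lemma map_W1e (n : ℕ) : (W1e n).map letG = w1L n := by
  simp [W1e, w1L, List.map_append, List.map_replicate, List.append_assoc]

lemma map_W2e (n : ℕ) : (W2e n).map letG = w2L n := by
  simp [W2e, w2L, List.map_append, List.map_replicate, List.append_assoc]

lemma len_w1L (n : ℕ) : (w1L n).length = 4*n+2 := by
  simp [w1L]; omega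

lemma len_w2L (n : ℕ) : (w2L n).length = 4*n+2 := by
  simp [w2L]; omega

lemma prod_w1L (n : ℕ) : (w1L n).prod = gL n := by
  simp only [w1L, gL, List.prod_append, List.prod_replicate, List.prod_singleton]
  group

lemma prod_w2L (n : ℕ) : (w2L n).prod = gL n := by
  have key := lamp_comm ((n:ℤ)) (-(n:ℤ))
  rw [neg_neg] at key
  have h1 : (w2L n).prod =
      ((lt 2)^(-(n:ℤ)) * la 2 * (lt 2)^((n:ℤ))) * ((lt 2)^((n:ℤ)) * la 2 * (lt 2)^(-(n:ℤ))) := by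
    simp only [w2L, List.prod_append, List.prod_replicate, List.prod_singleton]
    group
  have h2 : gL n =
      ((lt 2)^((n:ℤ)) * la 2 * (lt 2)^(-(n:ℤ))) * ((lt 2)^(-(n:ℤ)) * la 2 * (lt 2)^((n:ℤ))) := by
    rw [gL]; group
  rw [h1, h2, key]

lemma mem_w1L (n : ℕ) :
    ∀ x ∈ w1L n, x ∈ ({la 2, lt 2} : Set (Lamp 2)) ∨ x⁻¹ ∈ ({la 2, lt 2} : Set (Lamp 2)) := by
  intro x hx
  simp only [w1L, List.mem_append, List.mem_replicate, List.mem_singleton] at hx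
  rcases hx with ((((⟨-, rfl⟩ | rfl) | ⟨-, rfl⟩) | rfl) | ⟨-, rfl⟩)
  · exact Or.inl (Or.inr rfl)
  · exact Or.inl (Or.inl rfl)
  · exact Or.inr (by rw [inv_inv]; exact Or.inr rfl)
  · exact Or.inl (Or.inl rfl)
  · exact Or.inl (Or.inr rfl)

lemma mem_w2L (n : ℕ) :
    ∀ x ∈ w2L n, x ∈ ({la 2, lt 2} : Set (Lamp 2)) ∨ x⁻¹ ∈ ({la 2, lt 2} : Set (Lamp 2)) := by
  intro x hx
  simp only [w2L, List.mem_append, List.mem_replicate, List.mem_singleton] at hx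
  rcases hx with ((((⟨-, rfl⟩ | rfl) | ⟨-, rfl⟩) | rfl) | ⟨-, rfl⟩)
  · exact Or.inr (by rw [inv_inv]; exact Or.inr rfl)
  · exact Or.inl (Or.inl rfl)
  · exact Or.inl (Or.inr rfl)
  · exact Or.inl (Or.inl rfl)
  · exact Or.inr (by rw [inv_inv]; exact Or.inr rfl)

lemma wordLength_g (n : ℕ) (hn : 1 ≤ n) :
    wordLength ({la 2, lt 2} : Set (Lamp 2)) (gL n) = 4*n+2 := by
  have hmem : (4*n+2) ∈ {m | ∃ l : List (Lamp 2),
      (∀ x ∈ l, x ∈ ({la 2, lt 2} : Set (Lamp 2)) ∨ x⁻¹ ∈ ({la 2, lt 2} : Set (Lamp 2))) ∧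
      l.length = m ∧ l.prod = gL n} :=
    ⟨w1L n, mem_w1L n, len_w1L n, prod_w1L n⟩
  apply le_antisymm
  · exact Nat.sInf_le hmem
  · apply le_csInf ⟨_, hmem⟩
    rintro m ⟨l, hl, hlen, hprod⟩
    obtain ⟨c, rfl⟩ := encode l hl
    have hev : ev c = tgt n := by
      rw [← phi_prod, hprod]
      exact phi_g n hn
    have := (main n hn c hev).1
    rw [← hlen, List.length_map]
    exact this

theorem final (n : ℕ) (hn : 1 ≤ n) :
    w1L n ≠ w2L n ∧
    ∀ l : List (Lamp 2),
      ((∀ x ∈ l, x ∈ ({la 2, lt 2} : Set (Lamp 2)) ∨ x⁻¹ ∈ ({la 2, lt 2} : Set (Lamp 2))) ∧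
        l.prod = gL n ∧ l.length = wordLength ({la 2, lt 2} : Set (Lamp 2)) (gL n)) ↔
      (l = w1L n ∨ l = w2L n) := by
  constructor
  · intro hcon
    rw [← map_W1e, ← map_W2e] at hcon
    have := (List.map_injective_iff.mpr letG_injective) hcon
    obtain ⟨m, rfl⟩ := Nat.exists_eq_add_of_le hn
    rw [add_comm 1 m] at this
    simp [W1e, W2e, List.replicate_succ] at this
  · intro l
    constructor
    · rintro ⟨hl, hprod, hlen⟩
      rw [wordLength_g n hn] at hlen
      obtain ⟨c, rfl⟩ := encode l hl
      have hev : ev c = tgt n := by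
        rw [← phi_prod, hprod]
        exact phi_g n hn
      have hlc : c.length = 4*n+2 := by rwa [List.length_map] at hlen
      rcases (main n hn c hev).2 hlc with h | h
      · left; rw [h, map_W1e]
      · right; rw [h, map_W2e]
    · rintro (rfl | rfl)
      · exact ⟨mem_w1L n, prod_w1L n, by rw [wordLength_g n hn, len_w1L]⟩
      · exact ⟨mem_w2L n, prod_w2L n, by rw [wordLength_g n hn, len_w2L]⟩

end LampAux


/-- In `L₂` with generating set `{a, t}`, for `n ≥ 1` the element
`gₙ = (tⁿ a t⁻ⁿ)(t⁻ⁿ a tⁿ)` has exactly two geodesic representatives: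
`tⁿ a t⁻²ⁿ a tⁿ` and `t⁻ⁿ a t²ⁿ a t⁻ⁿ`. -/
theorem lamplighter_gn_two_geodesics (n : ℕ) (hn : 1 ≤ n) :
    letI S : Set (Lamp 2) := {la 2, lt 2}
    letI a := la 2
    letI t := lt 2
    letI g := t ^ n * a * (t ^ n)⁻¹ * ((t ^ n)⁻¹ * a * t ^ n)
    letI w1 := List.replicate n t ++ [a] ++ List.replicate (2 * n) t⁻¹ ++ [a] ++
      List.replicate n t
    letI w2 := List.replicate n t⁻¹ ++ [a] ++ List.replicate (2 * n) t ++ [a] ++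
      List.replicate n t⁻¹
    w1 ≠ w2 ∧
    ∀ l : List (Lamp 2),
      ((∀ x ∈ l, x ∈ S ∨ x⁻¹ ∈ S) ∧ l.prod = g ∧ l.length = wordLength S g) ↔
        (l = w1 ∨ l = w2) := by
  exact LampAux.final n hn
end

section
/- Let w ∈ L₂ = ℤ₂ ≀ ℤ have right-first normal form a_{i₁} a_{i₂} ⋯ a_{i_m} a_{−j₁} ⋯ a_{−j_l} t^r with 0 ≤ i₁ < i₂ < ⋯ < i_m and 0 < j₁ < ⋯ < j_l, where a_k = t^k a t^{−k}. Then the word length of w with respect to {a, t} equals m + l + min(2 j_l + i_m + |r − i_m|, 2 i_m + j_l + |r + j_l|). -/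
open scoped commutatorElement

/-- The conjugate `a_k = t^k a t^{-k}` in `L₂`. -/
noncomputable def lampA (k : ℤ) : Lamp 2 := lt 2 ^ k * la 2 * lt 2 ^ (-k)


noncomputable section
namespace LampAux

abbrev NN : Type := ℤ →₀ ZMod 2
abbrev MN : Type := Multiplicative NN

def shift1 : MulAut MN := AddEquiv.toMultiplicative (Finsupp.domCongr (Equiv.addRight (1:ℤ)))

def shiftHom : Multiplicative ℤ →* MulAut MN := zpowersHom _ shift1

abbrev LL_s4 : Type := MN ⋊[shiftHom] Multiplicative ℤ

def AA : LL_s4 := SemidirectProduct.inl (Multiplicative.ofAdd (Finsupp.single 0 1))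
def TT : LL_s4 := SemidirectProduct.inr (Multiplicative.ofAdd 1)

def sigma (k : ℤ) (v : NN) : NN := Finsupp.equivMapDomain (Equiv.addRight k) v

lemma shift1_apply (v : NN) : shift1 (Multiplicative.ofAdd v) = Multiplicative.ofAdd (sigma 1 v) := by
  rfl

lemma sigma_sigma (k k' : ℤ) (v : NN) : sigma k (sigma k' v) = sigma (k' + k) v := by
  unfold sigma
  rw [← Finsupp.equivMapDomain_trans]
  congr 1
  ext x
  simp [add_assoc]

lemma sigma_zero (v : NN) : sigma 0 v = v := by
  unfold sigma
  have : Equiv.addRight (0:ℤ) = Equiv.refl ℤ := by ext x; simp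
  rw [this, Finsupp.equivMapDomain_refl]

lemma sigma_apply (k : ℤ) (v : NN) (p : ℤ) : sigma k v p = v (p - k) := by
  rfl

lemma shiftHom_apply (k : ℤ) (v : NN) :
    shiftHom (Multiplicative.ofAdd k) (Multiplicative.ofAdd v) = Multiplicative.ofAdd (sigma k v) := by
  have base : ∀ v : NN, shiftHom (Multiplicative.ofAdd (1:ℤ)) (Multiplicative.ofAdd v)
      = Multiplicative.ofAdd (sigma 1 v) := by
    intro v
    simp [shiftHom, zpowersHom_apply, shift1_apply]
  induction k using Int.induction_on with
  | zero => simp [shiftHom, zpowersHom_apply, sigma_zero]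
  | succ n ih =>
      have : (Multiplicative.ofAdd ((n:ℤ)+1)) = Multiplicative.ofAdd (1:ℤ) * Multiplicative.ofAdd (n:ℤ) := by
        simp [← ofAdd_add, add_comm]
      rw [this, map_mul, MulAut.mul_apply, ih, base, sigma_sigma]
  | pred n ih =>
      have baseneg : ∀ w : NN, shiftHom (Multiplicative.ofAdd (-1:ℤ)) (Multiplicative.ofAdd w)
          = Multiplicative.ofAdd (sigma (-1) w) := by
        intro w
        apply (shiftHom (Multiplicative.ofAdd (1:ℤ))).injective
        have h1 : shiftHom (Multiplicative.ofAdd (1:ℤ)) (shiftHom (Multiplicative.ofAdd (-1:ℤ)) (Multiplicative.ofAdd w))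
            = Multiplicative.ofAdd w := by
          rw [← MulAut.mul_apply, ← map_mul]
          norm_num
        rw [h1, base, sigma_sigma]
        norm_num [sigma_zero]
      have h2 : (Multiplicative.ofAdd (-(n:ℤ)-1)) = Multiplicative.ofAdd (-1:ℤ) * Multiplicative.ofAdd (-(n:ℤ)) := by
        rw [← ofAdd_add]; ring_nf
      rw [h2, map_mul, MulAut.mul_apply, ih, baseneg, sigma_sigma]
      ring_nf

lemma AA_sq : AA * AA = 1 := by
  unfold AA
  rw [← map_mul, ← ofAdd_add]
  have : Finsupp.single (0:ℤ) (1:ZMod 2) + Finsupp.single 0 1 = 0 := by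
    rw [← Finsupp.single_add]; norm_num
    rfl
  rw [this]
  simp

lemma AA_inv : AA⁻¹ = AA := by
  rw [inv_eq_iff_mul_eq_one, AA_sq]

def Dk (k : ℤ) : LL_s4 := SemidirectProduct.inl (Multiplicative.ofAdd (Finsupp.single k 1))

def fgen : Bool → LL_s4 := fun b => if b then AA else TT

lemma TT_zpow (k : ℤ) : TT ^ k = SemidirectProduct.inr (Multiplicative.ofAdd k) := by
  unfold TT
  rw [← map_zpow]
  congr 1
  rw [← ofAdd_zsmul, smul_eq_mul, mul_one]

lemma conj_eq (k : ℤ) : TT ^ k * AA * TT ^ (-k) = Dk k := by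
  rw [TT_zpow, TT_zpow]
  have h1 : SemidirectProduct.inr (φ := shiftHom) (Multiplicative.ofAdd (-k)) =
      (SemidirectProduct.inr (Multiplicative.ofAdd k))⁻¹ := by
    rw [← map_inv, ← ofAdd_neg]
  rw [h1, AA, ← map_inv, ← SemidirectProduct.inl_aut]
  unfold Dk
  congr 1
  rw [shiftHom_apply]
  congr 1
  unfold sigma
  rw [Finsupp.equivMapDomain_single]
  simp

lemma free_conj (k : ℤ) :
    FreeGroup.lift fgen (FreeGroup.of false ^ k * FreeGroup.of true * FreeGroup.of false ^ (-k)) = Dk k := by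
  rw [map_mul, map_mul, map_zpow, map_zpow, FreeGroup.lift_apply_of, FreeGroup.lift_apply_of]
  show TT ^ k * AA * TT ^ (-k) = Dk k
  exact conj_eq k

lemma rels_one : ∀ r ∈ lampRels 2, FreeGroup.lift fgen r = 1 := by
  intro r hr
  rcases hr with h | ⟨i, j, h⟩
  · rcases h with rfl
    rw [map_pow, FreeGroup.lift_apply_of]
    show AA ^ 2 = 1
    rw [pow_two, AA_sq]
  · subst h
    rw [map_commutatorElement, free_conj, free_conj, commutatorElement_eq_one_iff_commute]
    exact (Commute.all _ _).map (SemidirectProduct.inl (φ := shiftHom))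

def f : Lamp 2 →* LL_s4 := PresentedGroup.toGroup rels_one

lemma f_la : f (la 2) = AA := by
  unfold f la
  rw [PresentedGroup.toGroup.of]
  rfl

lemma f_lt : f (lt 2) = TT := by
  unfold f lt
  rw [PresentedGroup.toGroup.of]
  rfl

lemma f_lampA (k : ℤ) : f (lampA k) = Dk k := by
  unfold lampA
  rw [map_mul, map_mul, map_zpow, map_zpow, f_la, f_lt]
  exact conj_eq k

-- ===== generic word machinery =====
section WordMachinery
variable {G : Type*} [Group G] (a t : G)

def tword (t : G) (k : ℤ) : List G := List.replicate k.natAbs (if 0 ≤ k then t else t⁻¹)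

lemma tword_prod (k : ℤ) : (tword t k).prod = t ^ k := by
  unfold tword
  rw [List.prod_replicate]
  split_ifs with h
  · rw [← zpow_natCast]
    congr 1
    omega
  · rw [inv_pow, ← zpow_natCast, ← zpow_neg]
    congr 1
    omega

lemma tword_length (k : ℤ) : (tword t k).length = k.natAbs := by simp [tword]

lemma tword_mem (k : ℤ) : ∀ x ∈ tword t k, x = t ∨ x = t⁻¹ := by
  intro x hx
  unfold tword at hx
  rcases List.eq_of_mem_replicate hx with h
  split_ifs at h
  · exact Or.inl h
  · exact Or.inr h

def wfB (a t : G) : ℤ → List ℤ → List G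
  | _, [] => []
  | s, p :: P => tword t (p - s) ++ [a] ++ wfB a t p P

def lampA' (a t : G) (k : ℤ) : G := t ^ k * a * t ^ (-k)

lemma wfB_prod (P : List ℤ) (s : ℤ) :
    (wfB a t s P).prod = t ^ (-s) * (P.map (lampA' a t)).prod * t ^ (P.getLastD s) := by
  induction P generalizing s with
  | nil => simp [wfB, zpow_neg]
  | cons p P ih =>
      rw [wfB, List.prod_append, List.prod_append, ih, tword_prod, List.prod_singleton,
        List.map_cons, List.prod_cons, List.getLastD_cons]
      unfold lampA'
      rw [show (t:G) ^ (p - s) = t ^ (-s) * t ^ p by rw [← zpow_add]; ring_nf]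
      group

lemma wfB_mem (P : List ℤ) (s : ℤ) : ∀ x ∈ wfB a t s P, x = a ∨ x = t ∨ x = t⁻¹ := by
  induction P generalizing s with
  | nil => simp [wfB]
  | cons p P ih =>
      intro x hx
      rw [wfB, List.mem_append, List.mem_append] at hx
      rcases hx with (hx | hx) | hx
      · rcases tword_mem t _ x hx with h | h
        · exact Or.inr (Or.inl h)
        · exact Or.inr (Or.inr h)
      · simp at hx; exact Or.inl hx
      · exact ih p x hx

lemma chain_getLastD_ge (P : List ℤ) (p : ℤ) (h : List.Chain (· ≤ ·) p P) : p ≤ P.getLastD p := by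
  induction P generalizing p with
  | nil => simp
  | cons q Q ih =>
      rw [List.Chain, List.chain_cons] at h
      rw [List.getLastD_cons]
      exact le_trans h.1 (ih q h.2)

lemma chain_getLastD_le (P : List ℤ) (p : ℤ) (h : List.Chain (· ≥ ·) p P) : P.getLastD p ≤ p := by
  induction P generalizing p with
  | nil => simp
  | cons q Q ih =>
      rw [List.Chain, List.chain_cons] at h
      rw [List.getLastD_cons]
      exact le_trans (ih q h.2) h.1

lemma wfB_len_up (P : List ℤ) (s : ℤ) (h : List.Chain (· ≤ ·) s P) :
    ((wfB a t s P).length : ℤ) = P.length + (P.getLastD s - s) := by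
  induction P generalizing s with
  | nil => simp [wfB]
  | cons p P ih =>
      rw [List.Chain, List.chain_cons] at h
      have ihh := ih p h.2
      rw [wfB, List.length_append, List.length_append, tword_length, List.getLastD_cons,
        List.length_singleton, List.length_cons]
      have hlast : p ≤ P.getLastD p := chain_getLastD_ge P p h.2
      omega

lemma wfB_len_down (P : List ℤ) (s : ℤ) (h : List.Chain (· ≥ ·) s P) :
    ((wfB a t s P).length : ℤ) = P.length + (s - P.getLastD s) := by
  induction P generalizing s with
  | nil => simp [wfB]
  | cons p P ih =>
      rw [List.Chain, List.chain_cons] at h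
      have ihh := ih p h.2
      rw [wfB, List.length_append, List.length_append, tword_length, List.getLastD_cons,
        List.length_singleton, List.length_cons]
      have hlast : P.getLastD p ≤ p := chain_getLastD_le P p h.2
      omega

lemma wfB_append (P Q : List ℤ) (s : ℤ) :
    wfB a t s (P ++ Q) = wfB a t s P ++ wfB a t (P.getLastD s) Q := by
  induction P generalizing s with
  | nil => simp [wfB]
  | cons p P ih =>
      rw [List.cons_append, wfB, wfB, ih, List.getLastD_cons]
      simp [List.append_assoc]

end WordMachinery

lemma getLastD_append (P Q : List ℤ) (s : ℤ) :
    (P ++ Q).getLastD s = Q.getLastD (P.getLastD s) := by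
  induction P generalizing s with
  | nil => rfl
  | cons p P ih => rw [List.cons_append, List.getLastD_cons, List.getLastD_cons, ih]

lemma getLastD_eq_getLast?_getD (P : List ℤ) (d : ℤ) : P.getLastD d = P.getLast?.getD d := by
  cases P with
  | nil => rfl
  | cons p P => rw [List.getLastD_eq_getLast?]

lemma getLastD_ofFn_pos {n : ℕ} (g : Fin n → ℤ) (d : ℤ) (h : 0 < n) :
    (List.ofFn g).getLastD d = g ⟨n - 1, by omega⟩ := by
  have hne : List.ofFn g ≠ [] := by
    apply List.ne_nil_of_length_pos
    rw [List.length_ofFn]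
    exact h
  rw [getLastD_eq_getLast?_getD, List.getLast?_eq_getLast hne, Option.getD_some,
    List.getLast_ofFn]

lemma chain_ofFn {n : ℕ} (R : ℤ → ℤ → Prop) (s : ℤ) (g : Fin n → ℤ)
    (h0 : ∀ h : 0 < n, R s (g ⟨0, h⟩))
    (hs : ∀ (a : ℕ) (h : a + 1 < n), R (g ⟨a, by omega⟩) (g ⟨a + 1, h⟩)) :
    List.Chain R s (List.ofFn g) := by
  show List.IsChain R (s :: List.ofFn g)
  rw [List.isChain_iff_getElem]
  intro a h
  rcases a with _ | a
  · simp only [List.getElem_cons_zero, List.getElem_cons_succ, List.getElem_ofFn]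
    exact h0 (by simpa using h)
  · simp only [List.getElem_cons_succ, List.getElem_ofFn]
    exact hs a (by simpa using h)

-- ===== commuting of lamps in Lamp 2 =====

lemma lampA_eq_pi (p : ℤ) :
    (QuotientGroup.mk' (Subgroup.normalClosure (lampRels 2)))
      (FreeGroup.of false ^ p * FreeGroup.of true * FreeGroup.of false ^ (-p)) = lampA p := by
  rw [map_mul, map_mul, map_zpow, map_zpow]
  rfl

lemma lampA_comm (p q : ℤ) : Commute (lampA p) (lampA q) := by
  have hone : (QuotientGroup.mk' (Subgroup.normalClosure (lampRels 2)))
      ⁅FreeGroup.of false ^ p * FreeGroup.of true * FreeGroup.of false ^ (-p),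
        FreeGroup.of false ^ q * FreeGroup.of true * FreeGroup.of false ^ (-q)⁆ = 1 := by
    rw [QuotientGroup.mk'_apply]
    refine (QuotientGroup.eq_one_iff _).2 (Subgroup.subset_normalClosure ?_)
    exact Set.mem_union_right _ ⟨p, q, rfl⟩
  rw [map_commutatorElement, lampA_eq_pi, lampA_eq_pi] at hone
  exact commutatorElement_eq_one_iff_commute.1 hone

lemma pairwise_commute_lampA (P : List ℤ) : (P.map lampA).Pairwise Commute := by
  induction P with
  | nil => exact List.Pairwise.nil
  | cons p P ih =>
      rw [List.map_cons]
      refine List.Pairwise.cons ?_ ih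
      intro y hy
      rcases List.mem_map.1 hy with ⟨q, _, rfl⟩
      exact lampA_comm p q

lemma lamp_prod_perm {P Q : List ℤ} (h : P.Perm Q) :
    (P.map lampA).prod = (Q.map lampA).prod := by
  exact List.Perm.prod_eq' (h.map lampA) (pairwise_commute_lampA P)

-- ===== lower bound machinery in LL =====

def Ltr (x : LL_s4) : Prop := x = AA ∨ x = TT ∨ x = TT⁻¹

lemma TT_inv : TT⁻¹ = SemidirectProduct.inr (Multiplicative.ofAdd (-1)) := by
  unfold TT
  rw [← map_inv, ← ofAdd_neg]

def rtd (x : LL_s4) : ℤ := Multiplicative.toAdd (SemidirectProduct.rightHom x)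
def lfd (x : LL_s4) : NN := Multiplicative.toAdd x.left

lemma rtd_AA : rtd AA = 0 := rfl
lemma rtd_TT : rtd TT = 1 := rfl
lemma rtd_TTinv : rtd TT⁻¹ = -1 := by rw [TT_inv]; rfl
lemma lfd_AA : lfd AA = Finsupp.single 0 1 := rfl
lemma lfd_TT : lfd TT = 0 := rfl
lemma lfd_TTinv : lfd TT⁻¹ = 0 := by rw [TT_inv]; rfl

def cs (ms : List LL_s4) (n : ℕ) : ℤ := rtd (ms.take n).prod
def tc (ms : List LL_s4) : ℕ := (ms.map fun x => (rtd x).natAbs).sum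
def FF (ms : List LL_s4) : NN := lfd ms.prod

lemma rtd_mul (x y : LL_s4) : rtd (x * y) = rtd x + rtd y := by
  unfold rtd
  rw [map_mul, toAdd_mul]

lemma cs_zero (ms : List LL_s4) : cs ms 0 = 0 := rfl

lemma cs_cons (x : LL_s4) (ms : List LL_s4) (n : ℕ) : cs (x :: ms) (n + 1) = rtd x + cs ms n := by
  unfold cs
  rw [List.take_succ_cons, List.prod_cons, rtd_mul]

lemma cs_length (ms : List LL_s4) : cs ms ms.length = rtd ms.prod := by
  rw [cs, List.take_length]

lemma FF_nil : FF [] = 0 := rfl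

lemma FF_cons (x : LL_s4) (ms : List LL_s4) : FF (x :: ms) = lfd x + sigma (rtd x) (FF ms) := by
  unfold FF lfd rtd at *
  rw [List.prod_cons, SemidirectProduct.mul_left, toAdd_mul]
  congr 1
  rw [SemidirectProduct.rightHom_eq_right]
  conv_lhs => rw [← ofAdd_toAdd x.right, ← ofAdd_toAdd ms.prod.left]
  rw [shiftHom_apply, toAdd_ofAdd]

lemma sigma_supp_card (k : ℤ) (v : NN) : (sigma k v).support.card = v.support.card := by
  unfold sigma
  rw [Finsupp.equivMapDomain_eq_mapDomain, Finsupp.mapDomain_support_of_injective (Equiv.injective _)]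
  exact Finset.card_image_of_injective _ (Equiv.injective _)

lemma lower_card (ms : List LL_s4) (h : ∀ x ∈ ms, Ltr x) :
    (FF ms).support.card + tc ms ≤ ms.length := by
  induction ms with
  | nil => simp [FF_nil, tc]
  | cons x ms ih =>
      have hx := h x List.mem_cons_self
      have ihh := ih fun y hy => h y (List.mem_cons_of_mem x hy)
      have htc : tc (x :: ms) = (rtd x).natAbs + tc ms := by simp [tc]
      rw [FF_cons, List.length_cons, htc]
      rcases hx with rfl | rfl | rfl
      · rw [rtd_AA, sigma_zero, lfd_AA]
        have hsupp : ((Finsupp.single (0:ℤ) (1:ZMod 2)) + FF ms).support.card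
            ≤ 1 + (FF ms).support.card := by
          calc ((Finsupp.single (0:ℤ) (1:ZMod 2)) + FF ms).support.card
              ≤ ((Finsupp.single (0:ℤ) (1:ZMod 2)).support ∪ (FF ms).support).card :=
                Finset.card_le_card Finsupp.support_add
            _ ≤ (Finsupp.single (0:ℤ) (1:ZMod 2)).support.card + (FF ms).support.card :=
                Finset.card_union_le _ _
            _ ≤ 1 + (FF ms).support.card := by
                have := Finset.card_le_card (Finsupp.support_single_subset
                  (a := (0:ℤ)) (b := (1:ZMod 2)))
                simpa using Nat.add_le_add_right (by simpa using this) _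
        omega
      · rw [rtd_TT, lfd_TT, zero_add, sigma_supp_card]
        omega
      · rw [rtd_TTinv, lfd_TTinv, zero_add, sigma_supp_card]
        have : ((-1 : ℤ)).natAbs = 1 := rfl
        omega

lemma lower_visit (ms : List LL_s4) (h : ∀ x ∈ ms, Ltr x) :
    ∀ p : ℤ, FF ms p ≠ 0 → ∃ n ≤ ms.length, cs ms n = p := by
  induction ms with
  | nil =>
      intro p hp
      rw [FF_nil] at hp
      exact absurd rfl hp
  | cons x ms ih =>
      intro p hp
      have hx := h x List.mem_cons_self
      rw [FF_cons, Finsupp.add_apply, sigma_apply] at hp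
      by_cases h2 : FF ms (p - rtd x) = 0
      · have hl : lfd x p ≠ 0 := by
          rw [h2, add_zero] at hp
          exact hp
        have hp0 : p = 0 := by
          rcases hx with rfl | rfl | rfl
          · rw [lfd_AA, Finsupp.single_apply] at hl
            by_contra hne
            rw [if_neg (by omega)] at hl
            exact hl rfl
          · rw [lfd_TT] at hl; exact absurd rfl hl
          · rw [lfd_TTinv] at hl; exact absurd rfl hl
        exact ⟨0, Nat.zero_le _, by rw [cs_zero, hp0]⟩
      · obtain ⟨n, hn, hcs⟩ := ih (fun y hy => h y (List.mem_cons_of_mem x hy)) _ h2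
        refine ⟨n + 1, by simpa using Nat.succ_le_succ hn, ?_⟩
        rw [cs_cons, hcs]
        ring

lemma tc_sum (ms : List LL_s4) :
    (tc ms : ℤ) = ∑ n ∈ Finset.range ms.length, |cs ms (n + 1) - cs ms n| := by
  induction ms with
  | nil => simp [tc]
  | cons x ms ih =>
      rw [List.length_cons, Finset.sum_range_succ']
      have h0 : |cs (x :: ms) (0 + 1) - cs (x :: ms) 0| = |rtd x| := by
        rw [cs_cons, cs_zero, cs_zero]
        simp
      have hterm : ∀ n ∈ Finset.range ms.length,
          |cs (x :: ms) (n + 1 + 1) - cs (x :: ms) (n + 1)| = |cs ms (n + 1) - cs ms n| := by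
        intro n _
        rw [cs_cons, cs_cons]
        ring_nf
      rw [Finset.sum_congr rfl hterm, ← ih, h0]
      have : tc (x :: ms) = (rtd x).natAbs + tc ms := by simp [tc]
      rw [this]
      push_cast [Int.natCast_natAbs]
      ring

lemma seg (ms : List LL_s4) (a b : ℕ) (hab : a ≤ b) :
    |cs ms b - cs ms a| ≤ ∑ n ∈ Finset.Ico a b, |cs ms (n + 1) - cs ms n| := by
  induction b, hab using Nat.le_induction with
  | base => simp
  | succ b hb ih =>
      rw [Finset.sum_Ico_succ_top hb]
      calc |cs ms (b + 1) - cs ms a|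
          ≤ |cs ms (b + 1) - cs ms b| + |cs ms b - cs ms a| := abs_sub_le _ _ _
        _ ≤ |cs ms (b + 1) - cs ms b| + ∑ n ∈ Finset.Ico a b, |cs ms (n + 1) - cs ms n| := by
            exact add_le_add (le_refl _) ih
        _ = _ := by ring

lemma travel (ms : List LL_s4) (n₁ n₂ : ℕ) (h12 : n₁ ≤ n₂) (h2 : n₂ ≤ ms.length) :
    |cs ms n₁| + |cs ms n₂ - cs ms n₁| + |rtd ms.prod - cs ms n₂| ≤ (tc ms : ℤ) := by
  rw [tc_sum]
  have e1 : ∑ n ∈ Finset.Ico 0 n₁, |cs ms (n + 1) - cs ms n|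
      + ∑ n ∈ Finset.Ico n₁ n₂, |cs ms (n + 1) - cs ms n|
      + ∑ n ∈ Finset.Ico n₂ ms.length, |cs ms (n + 1) - cs ms n|
      = ∑ n ∈ Finset.range ms.length, |cs ms (n + 1) - cs ms n| := by
    rw [Finset.sum_Ico_consecutive _ (Nat.zero_le n₁) h12,
      Finset.sum_Ico_consecutive _ (le_trans (Nat.zero_le n₁) h12) h2]
    rw [Finset.range_eq_Ico]
  rw [← e1]
  have s1 := seg ms 0 n₁ (Nat.zero_le _)
  have s2 := seg ms n₁ n₂ h12
  have s3 := seg ms n₂ ms.length h2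
  rw [cs_zero, sub_zero] at s1
  rw [cs_length] at s3
  gcongr

-- ===== image of w under f =====

lemma ofAdd_ofFn_prod {n : ℕ} (v : Fin n → NN) :
    (List.ofFn fun k => Multiplicative.ofAdd (v k)).prod = Multiplicative.ofAdd (∑ k, v k) := by
  induction n with
  | zero => simp
  | succ n ih =>
      rw [List.ofFn_succ, List.prod_cons, ih, ← ofAdd_add, Fin.sum_univ_succ]

lemma f_lamp_list {n : ℕ} (g : Fin n → ℤ) :
    f (List.ofFn fun k => lampA (g k)).prod
      = SemidirectProduct.inl (Multiplicative.ofAdd (∑ k, Finsupp.single (g k) (1 : ZMod 2))) := by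
  rw [map_list_prod, List.map_ofFn]
  have : (⇑f ∘ fun k => lampA (g k)) = fun k =>
      SemidirectProduct.inl (φ := shiftHom) (Multiplicative.ofAdd (Finsupp.single (g k) (1 : ZMod 2))) := by
    funext k
    exact f_lampA (g k)
  rw [this]
  have : (List.ofFn fun k => SemidirectProduct.inl (φ := shiftHom)
      (Multiplicative.ofAdd (Finsupp.single (g k) (1 : ZMod 2))))
      = (List.ofFn fun k => (Multiplicative.ofAdd (Finsupp.single (g k) (1 : ZMod 2)))).map
        (SemidirectProduct.inl (φ := shiftHom)) := by
    rw [List.map_ofFn]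
    rfl
  rw [this, ← map_list_prod, ofAdd_ofFn_prod]

lemma sum_single_apply (s : Finset ℤ) (p : ℤ) :
    (∑ q ∈ s, Finsupp.single q (1 : ZMod 2)) p = if p ∈ s then 1 else 0 := by
  rw [Finsupp.finset_sum_apply]
  rw [show (∑ q ∈ s, (Finsupp.single q (1 : ZMod 2)) p)
      = ∑ q ∈ s, if q = p then (1 : ZMod 2) else 0 from
    Finset.sum_congr rfl fun q _ => Finsupp.single_apply]
  rw [Finset.sum_ite_eq' s p fun _ => (1 : ZMod 2)]

lemma sum_single_support (s : Finset ℤ) :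
    (∑ q ∈ s, Finsupp.single q (1 : ZMod 2)).support = s := by
  ext p
  rw [Finsupp.mem_support_iff, sum_single_apply]
  split_ifs with h
  · simpa using h
  · simpa using h


end LampAux

open LampAux in
/-- Word length formula for `L₂` with generating set `{a, t}`: if
`w = a_{i₁} ⋯ a_{i_m} a_{−j₁} ⋯ a_{−j_l} t^r` with `0 ≤ i₁ < ⋯ < i_m` and
`0 < j₁ < ⋯ < j_l`, then `|w| = m + l + min(2 j_l + i_m + |r − i_m|, 2 i_m + j_l + |r + j_l|)`
(with `i_m`, `j_l` interpreted as `0` when `m = 0` resp. `l = 0`). -/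
theorem lamplighter_wordLength_formula (m l : ℕ) (r : ℤ)
    (i : Fin m → ℤ) (j : Fin l → ℤ) (hi : StrictMono i) (hj : StrictMono j)
    (hi0 : ∀ k, 0 ≤ i k) (hj0 : ∀ k, 0 < j k) :
    letI S : Set (Lamp 2) := {la 2, lt 2}
    letI w := (List.ofFn fun k => lampA (i k)).prod *
      (List.ofFn fun k => lampA (-(j k))).prod * lt 2 ^ r
    letI im : ℤ := ((List.ofFn i).getLast?).getD 0
    letI jl : ℤ := ((List.ofFn j).getLast?).getD 0
    (wordLength S w : ℤ) =
      m + l + min (2 * jl + im + |r - im|) (2 * im + jl + |r + jl|) := by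
  classical
  set S : Set (Lamp 2) := {la 2, lt 2} with hS
  set w : Lamp 2 := (List.ofFn fun k => lampA (i k)).prod *
      (List.ofFn fun k => lampA (-(j k))).prod * lt 2 ^ r with hw
  set im : ℤ := ((List.ofFn i).getLast?).getD 0 with him
  set jl : ℤ := ((List.ofFn j).getLast?).getD 0 with hjl
  set Pneg : List ℤ := List.ofFn fun k => -(j k) with hPneg
  set Ppos : List ℤ := List.ofFn i with hPpos
  -- basic values
  have himL : Ppos.getLastD 0 = im := getLastD_eq_getLast?_getD _ 0
  have hjlL : (List.ofFn j).getLastD 0 = jl := getLastD_eq_getLast?_getD _ 0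
  have him_val : ∀ h : 0 < m, im = i ⟨m - 1, by omega⟩ := by
    intro h
    rw [← himL, hPpos, getLastD_ofFn_pos i 0 h]
  have hjl_val : ∀ h : 0 < l, jl = j ⟨l - 1, by omega⟩ := by
    intro h
    rw [← hjlL, getLastD_ofFn_pos j 0 h]
  have him_zero : m = 0 → im = 0 := by
    intro h
    rw [← himL, hPpos]
    have : List.ofFn i = [] := by
      apply List.eq_nil_of_length_eq_zero
      simp [h]
    rw [this]
    rfl
  have hjl_zero : l = 0 → jl = 0 := by
    intro h
    rw [← hjlL]
    have : List.ofFn j = [] := by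
      apply List.eq_nil_of_length_eq_zero
      simp [h]
    rw [this]
    rfl
  have hiim : ∀ k : Fin m, i k ≤ im := by
    intro k
    have hk := k.isLt
    rw [him_val k.pos]
    apply hi.monotone
    show k.val ≤ m - 1
    omega
  have hjjl : ∀ k : Fin l, j k ≤ jl := by
    intro k
    have hk := k.isLt
    rw [hjl_val k.pos]
    apply hj.monotone
    show k.val ≤ l - 1
    omega
  have him0 : 0 ≤ im := by
    rcases Nat.eq_zero_or_pos m with h | h
    · rw [him_zero h]
    · rw [him_val h]; exact hi0 _
  have hjl0 : 0 ≤ jl := by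
    rcases Nat.eq_zero_or_pos l with h | h
    · rw [hjl_zero h]
    · rw [hjl_val h]; exact le_of_lt (hj0 _)
  -- getLastD facts
  have hq1 : Pneg.getLastD 0 = -jl := by
    rcases Nat.eq_zero_or_pos l with h | h
    · rw [hjl_zero h, hPneg]
      have : List.ofFn (fun k => -(j k)) = ([] : List ℤ) := by
        apply List.eq_nil_of_length_eq_zero; simp [h]
      rw [this]; rfl
    · rw [hPneg, getLastD_ofFn_pos _ 0 h, hjl_val h]
  have hq2 : Ppos.getLastD 0 = im := himL
  -- chains
  have c1 : List.Chain (· ≥ ·) 0 Pneg := by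
    rw [hPneg]
    apply chain_ofFn
    · intro h
      have := hj0 ⟨0, h⟩
      omega
    · intro a h
      have := hj.monotone (a := ⟨a, by omega⟩) (b := ⟨a + 1, h⟩) (Fin.mk_le_mk.mpr (by omega))
      omega
  have c2 : List.Chain (· ≤ ·) (-jl) Ppos := by
    rw [hPpos]
    apply chain_ofFn
    · intro h
      have := hi0 ⟨0, h⟩
      omega
    · intro a h
      exact hi.monotone (a := ⟨a, by omega⟩) (b := ⟨a + 1, h⟩) (Fin.mk_le_mk.mpr (by omega))
  have c3 : List.Chain (· ≤ ·) 0 Ppos := by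
    rw [hPpos]
    apply chain_ofFn
    · intro h; exact hi0 ⟨0, h⟩
    · intro a h
      exact hi.monotone (a := ⟨a, by omega⟩) (b := ⟨a + 1, h⟩) (Fin.mk_le_mk.mpr (by omega))
  have c4 : List.Chain (· ≥ ·) im Pneg := by
    rw [hPneg]
    apply chain_ofFn
    · intro h
      have := hj0 ⟨0, h⟩
      omega
    · intro a h
      have := hj.monotone (a := ⟨a, by omega⟩) (b := ⟨a + 1, h⟩) (Fin.mk_le_mk.mpr (by omega))
      omega
  have hlenPneg : Pneg.length = l := by rw [hPneg]; simp
  have hlenPpos : Ppos.length = m := by rw [hPpos]; simp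
  -- the two via-points
  set U1 : ℤ := Ppos.getLastD (-jl) with hU1
  set U2 : ℤ := Pneg.getLastD im with hU2
  have hU1ge : -jl ≤ U1 := chain_getLastD_ge _ _ c2
  have hU1le : U1 ≤ im := by
    rcases Nat.eq_zero_or_pos m with h | h
    · have : Ppos = [] := by rw [hPpos]; apply List.eq_nil_of_length_eq_zero; simp [h]
      rw [hU1, this]
      simp only [List.getLastD]
      omega
    · rw [hU1, hPpos, getLastD_ofFn_pos _ _ h, ← him_val h]
  have hU2le : U2 ≤ im := chain_getLastD_le _ _ c4
  have hU2ge : -jl ≤ U2 := by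
    rcases Nat.eq_zero_or_pos l with h | h
    · have : Pneg = [] := by rw [hPneg]; apply List.eq_nil_of_length_eq_zero; simp [h]
      rw [hU2, this]
      simp only [List.getLastD]
      omega
    · rw [hU2, hPneg, getLastD_ofFn_pos _ _ h, ← hjl_val h]
  -- lamp products agree
  have hmapPpos : Ppos.map lampA = List.ofFn fun k => lampA (i k) := by
    rw [hPpos, List.map_ofFn]; rfl
  have hmapPneg : Pneg.map lampA = List.ofFn fun k => lampA (-(j k)) := by
    rw [hPneg, List.map_ofFn]; rfl
  have hlampprod : ((Ppos ++ Pneg).map lampA).prod =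
      (List.ofFn fun k => lampA (i k)).prod * (List.ofFn fun k => lampA (-(j k))).prod := by
    rw [List.map_append, List.prod_append, hmapPpos, hmapPneg]
  -- membership helper
  have hmemS : ∀ x : Lamp 2, (x = la 2 ∨ x = lt 2 ∨ x = (lt 2)⁻¹) → x ∈ S ∨ x⁻¹ ∈ S := by
    rintro x (rfl | rfl | rfl)
    · exact Or.inl (Set.mem_insert _ _)
    · exact Or.inl (Set.mem_insert_of_mem _ rfl)
    · refine Or.inr ?_
      rw [inv_inv]
      exact Set.mem_insert_of_mem _ rfl
  -- first witness word
  set ls₁ : List (Lamp 2) := wfB (la 2) (lt 2) 0 (Pneg ++ Ppos) ++ tword (lt 2) (im - U1)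
      ++ tword (lt 2) (r - im) with hls₁
  have hmem₁ : ∀ x ∈ ls₁, x ∈ S ∨ x⁻¹ ∈ S := by
    intro x hx
    rw [hls₁, List.mem_append, List.mem_append] at hx
    rcases hx with (hx | hx) | hx
    · exact hmemS x (wfB_mem _ _ _ _ x hx)
    · rcases tword_mem (lt 2) _ x hx with h | h
      · exact hmemS x (Or.inr (Or.inl h))
      · exact hmemS x (Or.inr (Or.inr h))
    · rcases tword_mem (lt 2) _ x hx with h | h
      · exact hmemS x (Or.inr (Or.inl h))
      · exact hmemS x (Or.inr (Or.inr h))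
  have hlastPP : (Pneg ++ Ppos).getLastD 0 = U1 := by
    rw [getLastD_append, hq1, hU1]
  have hprod₁ : ls₁.prod = w := by
    rw [hls₁, List.prod_append, List.prod_append, wfB_prod, tword_prod, tword_prod, hlastPP]
    have : List.map (lampA' (la 2) (lt 2)) (Pneg ++ Ppos) = List.map lampA (Pneg ++ Ppos) := rfl
    rw [this]
    rw [lamp_prod_perm (List.perm_append_comm (l₁ := Pneg) (l₂ := Ppos)), hlampprod, hw]
    rw [neg_zero, zpow_zero, one_mul]
    rw [mul_assoc, mul_assoc, mul_assoc, ← zpow_add, ← zpow_add]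
    ring_nf
    exact (mul_assoc _ _ _).symm
  have hlen₁ : (ls₁.length : ℤ) = m + l + (2 * jl + im + |r - im|) := by
    rw [hls₁, List.length_append, List.length_append, tword_length, tword_length,
      wfB_append, List.length_append]
    rw [hq1]
    have e1 := wfB_len_down (la 2) (lt 2) Pneg 0 c1
    have e2 := wfB_len_up (la 2) (lt 2) Ppos (-jl) c2
    rw [hq1] at e1
    rw [← hU1] at e2
    rw [hlenPneg] at e1
    rw [hlenPpos] at e2
    have habs1 : |r - im| = (((r - im).natAbs : ℤ)) := (Int.natCast_natAbs _).symm
    rw [habs1]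
    omega
  -- second witness word
  set ls₂ : List (Lamp 2) := wfB (la 2) (lt 2) 0 (Ppos ++ Pneg) ++ tword (lt 2) (-jl - U2)
      ++ tword (lt 2) (r - (-jl)) with hls₂
  have hmem₂ : ∀ x ∈ ls₂, x ∈ S ∨ x⁻¹ ∈ S := by
    intro x hx
    rw [hls₂, List.mem_append, List.mem_append] at hx
    rcases hx with (hx | hx) | hx
    · exact hmemS x (wfB_mem _ _ _ _ x hx)
    · rcases tword_mem (lt 2) _ x hx with h | h
      · exact hmemS x (Or.inr (Or.inl h))
      · exact hmemS x (Or.inr (Or.inr h))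
    · rcases tword_mem (lt 2) _ x hx with h | h
      · exact hmemS x (Or.inr (Or.inl h))
      · exact hmemS x (Or.inr (Or.inr h))
  have hlastPP2 : (Ppos ++ Pneg).getLastD 0 = U2 := by
    rw [getLastD_append, hq2, hU2]
  have hprod₂ : ls₂.prod = w := by
    rw [hls₂, List.prod_append, List.prod_append, wfB_prod, tword_prod, tword_prod, hlastPP2]
    have : List.map (lampA' (la 2) (lt 2)) (Ppos ++ Pneg) = List.map lampA (Ppos ++ Pneg) := rfl
    rw [this, hlampprod, hw]
    rw [neg_zero, zpow_zero, one_mul]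
    rw [mul_assoc, mul_assoc, mul_assoc, ← zpow_add, ← zpow_add]
    ring_nf
    exact (mul_assoc _ _ _).symm
  have hlen₂ : (ls₂.length : ℤ) = m + l + (2 * im + jl + |r + jl|) := by
    rw [hls₂, List.length_append, List.length_append, tword_length, tword_length,
      wfB_append, List.length_append]
    rw [hq2]
    have e1 := wfB_len_up (la 2) (lt 2) Ppos 0 c3
    have e2 := wfB_len_down (la 2) (lt 2) Pneg im c4
    rw [hq2] at e1
    rw [← hU2] at e2
    rw [hlenPpos] at e1
    rw [hlenPneg] at e2
    have habs1 : |r + jl| = (((r - -jl).natAbs : ℤ)) := by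
      rw [Int.natCast_natAbs]
      ring_nf
    rw [habs1]
    omega
  -- the set of word lengths
  set T : Set ℕ := {n | ∃ ls : List (Lamp 2), (∀ x ∈ ls, x ∈ S ∨ x⁻¹ ∈ S) ∧ ls.length = n ∧ ls.prod = w}
    with hT
  have hT1 : ls₁.length ∈ T := ⟨ls₁, hmem₁, rfl, hprod₁⟩
  have hT2 : ls₂.length ∈ T := ⟨ls₂, hmem₂, rfl, hprod₂⟩
  have hTne : T.Nonempty := ⟨ls₁.length, hT1⟩
  have hwl : wordLength S w = sInf T := rfl
  have hupper1 : (wordLength S w : ℤ) ≤ m + l + (2 * jl + im + |r - im|) := by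
    rw [hwl, ← hlen₁]
    exact_mod_cast Nat.cast_le.mpr (Nat.sInf_le hT1)
  have hupper2 : (wordLength S w : ℤ) ≤ m + l + (2 * im + jl + |r + jl|) := by
    rw [hwl, ← hlen₂]
    exact_mod_cast Nat.cast_le.mpr (Nat.sInf_le hT2)
  -- lower bound
  obtain ⟨ls, hlsmem, hlslen, hlsprod⟩ := Nat.sInf_mem hTne
  rw [← hwl] at hlslen
  set ms : List LL_s4 := ls.map f with hms_def
  have hms : ∀ x ∈ ms, Ltr x := by
    intro x hx
    rw [hms_def, List.mem_map] at hx
    obtain ⟨y, hy, rfl⟩ := hx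
    rcases hlsmem y hy with h | h
    · rcases h with rfl | h
      · exact Or.inl f_la
      · rw [Set.mem_singleton_iff] at h
        subst h
        exact Or.inr (Or.inl f_lt)
    · rcases h with h | h
      · have : y = (la 2)⁻¹ := by rw [← h, inv_inv]
        subst this
        left
        rw [map_inv, f_la, AA_inv]
      · rw [Set.mem_singleton_iff] at h
        have : y = (lt 2)⁻¹ := by rw [← h, inv_inv]
        subst this
        right; right
        rw [map_inv, f_lt]
  have hmslen : ms.length = ls.length := by rw [hms_def, List.length_map]
  have hmsprod : ms.prod = f w := by rw [hms_def, ← map_list_prod, hlsprod]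
  -- compute f w
  set F1 : NN := ∑ k : Fin m, Finsupp.single (i k) (1 : ZMod 2) with hF1
  set F2 : NN := ∑ k : Fin l, Finsupp.single (-(j k)) (1 : ZMod 2) with hF2
  set Fw : NN := F1 + F2 with hFw
  have hfw : f w = SemidirectProduct.inl (Multiplicative.ofAdd Fw)
      * SemidirectProduct.inr (Multiplicative.ofAdd r) := by
    rw [hw, map_mul, map_mul, f_lamp_list, f_lamp_list, map_zpow, f_lt, TT_zpow,
      ← map_mul (SemidirectProduct.inl (φ := shiftHom)), ← ofAdd_add, hFw, hF1, hF2]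
  have hFFms : FF ms = Fw := by
    rw [FF, hmsprod, hfw, lfd, SemidirectProduct.mul_left]
    simp
  have hrtdms : rtd ms.prod = r := by
    rw [hmsprod, hfw, rtd_mul, rtd, rtd]
    simp
  -- support of Fw
  set posSet : Finset ℤ := (Finset.univ.image i) ∪ (Finset.univ.image fun k => -(j k))
    with hposSet
  have hdisj : Disjoint (Finset.univ.image i) (Finset.univ.image fun k => -(j k)) := by
    rw [Finset.disjoint_left]
    intro p hp hp'
    rw [Finset.mem_image] at hp hp'
    obtain ⟨k, _, rfl⟩ := hp
    obtain ⟨k', _, hk'⟩ := hp'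
    have := hi0 k
    have := hj0 k'
    omega
  have hFs : Fw = ∑ q ∈ posSet, Finsupp.single q (1 : ZMod 2) := by
    rw [hposSet, Finset.sum_union hdisj, hFw, hF1, hF2]
    congr 1
    · rw [Finset.sum_image]
      intro a _ b _ h
      exact hi.injective h
    · rw [Finset.sum_image]
      intro a _ b _ h
      exact hj.injective (by simpa using h)
  have hsupp : Fw.support = posSet := by rw [hFs, sum_single_support]
  have hcard : posSet.card = m + l := by
    rw [hposSet, Finset.card_union_of_disjoint hdisj,
      Finset.card_image_of_injective _ hi.injective,
      Finset.card_image_of_injective _ (fun a b h => hj.injective (by omega : j a = j b))]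
    simp
  -- counting lamps
  have hcount : m + l + tc ms ≤ ms.length := by
    have := lower_card ms hms
    rw [hFFms, hsupp, hcard] at this
    exact this
  -- visits
  have hvis1 : ∃ n ≤ ms.length, cs ms n = im := by
    rcases Nat.eq_zero_or_pos m with h | h
    · exact ⟨0, Nat.zero_le _, by rw [cs_zero, him_zero h]⟩
    · apply lower_visit ms hms
      rw [hFFms, hFs, sum_single_apply, if_pos]
      · exact one_ne_zero
      · rw [hposSet]
        apply Finset.mem_union_left
        rw [Finset.mem_image]
        exact ⟨⟨m - 1, by omega⟩, Finset.mem_univ _, (him_val h).symm⟩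
  have hvis2 : ∃ n ≤ ms.length, cs ms n = -jl := by
    rcases Nat.eq_zero_or_pos l with h | h
    · refine ⟨0, Nat.zero_le _, ?_⟩
      rw [cs_zero, hjl_zero h]
      ring
    · apply lower_visit ms hms
      rw [hFFms, hFs, sum_single_apply, if_pos]
      · exact one_ne_zero
      · rw [hposSet]
        apply Finset.mem_union_right
        rw [Finset.mem_image]
        exact ⟨⟨l - 1, by omega⟩, Finset.mem_univ _, by rw [← hjl_val h]⟩
  obtain ⟨n₁, hn₁, hcs₁⟩ := hvis1
  obtain ⟨n₂, hn₂, hcs₂⟩ := hvis2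
  -- travel bounds
  have hlower : (m : ℤ) + l + min (2 * jl + im + |r - im|) (2 * im + jl + |r + jl|)
      ≤ (wordLength S w : ℤ) := by
    have hms_eq : (ms.length : ℤ) = (wordLength S w : ℤ) := by
      rw [hmslen, hlslen]
    rcases le_total n₁ n₂ with hor | hor
    · have ht := travel ms n₁ n₂ hor hn₂
      rw [hcs₁, hcs₂, hrtdms] at ht
      have e1 : |im| = im := abs_of_nonneg him0
      have e2 : |-jl - im| = im + jl := by
        rw [abs_of_nonpos (by omega)]
        ring
      have e3 : |r - -jl| = |r + jl| := by ring_nf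
      rw [e1, e2, e3] at ht
      have habs1 : |r + jl| = (((r + jl).natAbs : ℤ)) := (Int.natCast_natAbs _).symm
      have habs2 : |r - im| = (((r - im).natAbs : ℤ)) := (Int.natCast_natAbs _).symm
      rw [habs1] at ht ⊢
      rw [habs2]
      omega
    · have ht := travel ms n₂ n₁ hor hn₁
      rw [hcs₁, hcs₂, hrtdms] at ht
      have e1 : |(-jl : ℤ)| = jl := by
        rw [abs_neg]
        exact abs_of_nonneg hjl0
      have e2 : |im - -jl| = im + jl := by
        rw [abs_of_nonneg (by omega)]
        ring
      rw [e1, e2] at ht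
      have habs1 : |r + jl| = (((r + jl).natAbs : ℤ)) := (Int.natCast_natAbs _).symm
      have habs2 : |r - im| = (((r - im).natAbs : ℤ)) := (Int.natCast_natAbs _).symm
      rw [habs2] at ht ⊢
      rw [habs1]
      omega
  -- conclude
  have habs1 : |r + jl| = (((r + jl).natAbs : ℤ)) := (Int.natCast_natAbs _).symm
  have habs2 : |r - im| = (((r - im).natAbs : ℤ)) := (Int.natCast_natAbs _).symm
  rw [habs2] at hupper1
  rw [habs1] at hupper2
  rw [habs1, habs2] at hlower ⊢
  omega
end
end

section
/- The lamplighter group L_m = ℤ_m ≀ ℤ (m ≥ 2) has infinitely many cone types with respect to the generating set {a, t}. In particular, for distinct n, the elements t^n a t^{−2n} a represent elements with pairwise distinct cone types, since the cone type of t^n a t^{−2n} a contains the geodesic extension t^n but not t^{n+1}. -/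
open scoped commutatorElement

/-- The cone type of `g` with respect to the generating set `S`: the set of words `u`
over `S ∪ S⁻¹` all of whose prefixes extend `g` geodesically. -/
noncomputable def coneType {G : Type*} [Group G] (S : Set G) (g : G) : Set (List G) :=
  {u | (∀ x ∈ u, x ∈ S ∨ x⁻¹ ∈ S) ∧
    ∀ k ≤ u.length, wordLength S (g * (u.take k).prod) = wordLength S g + k}


namespace LampProof

variable (m : ℕ)

/-- Shift a finitely supported function by `p`. -/
def sh (p : ℤ) (f : ℤ →₀ ZMod m) : ℤ →₀ ZMod m :=
  Finsupp.equivMapDomain (Equiv.addRight p) f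

@[simp] lemma sh_apply (p : ℤ) (f : ℤ →₀ ZMod m) (x : ℤ) : sh m p f x = f (x - p) := by
  simp [sh, Finsupp.equivMapDomain_apply, Equiv.addRight, Equiv.subRight]
  rfl

@[simp] lemma sh_add (p : ℤ) (f g : ℤ →₀ ZMod m) :
    sh m p (f + g) = sh m p f + sh m p g := by
  ext x; simp

@[simp] lemma sh_sh (p q : ℤ) (f : ℤ →₀ ZMod m) : sh m p (sh m q f) = sh m (p + q) f := by
  ext x; simp [sub_sub]

@[simp] lemma sh_zero (p : ℤ) : sh m p (0 : ℤ →₀ ZMod m) = 0 := by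
  ext x; simp

@[simp] lemma sh_zero_shift (f : ℤ →₀ ZMod m) : sh m 0 f = f := by
  ext x; simp

@[simp] lemma sh_neg (p : ℤ) (f : ℤ →₀ ZMod m) : sh m p (-f) = -(sh m p f) := by
  ext x; simp

@[simp] lemma sh_single (p i : ℤ) (c : ZMod m) :
    sh m p (Finsupp.single i c) = Finsupp.single (i + p) c := by
  ext x
  rcases eq_or_ne x (i + p) with h | h
  · subst h
    rw [sh_apply, add_sub_cancel_right, Finsupp.single_eq_same, Finsupp.single_eq_same]
  · rw [sh_apply, Finsupp.single_eq_of_ne' (by omega), Finsupp.single_eq_of_ne' (Ne.symm h)]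

/-- The wreath product `ℤ/m ≀ ℤ` as lamp configurations with a cursor. -/
@[ext] structure W where
  f : ℤ →₀ ZMod m
  p : ℤ

noncomputable instance : Mul (W m) := ⟨fun x y => ⟨x.f + sh m x.p y.f, x.p + y.p⟩⟩
instance : One (W m) := ⟨⟨0, 0⟩⟩
noncomputable instance : Inv (W m) := ⟨fun x => ⟨-(sh m (-x.p) x.f), -x.p⟩⟩

@[simp] lemma mk_mul (f g : ℤ →₀ ZMod m) (p q : ℤ) :
    (W.mk f p) * (W.mk g q) = W.mk (f + sh m p g) (p + q) := rfl
@[simp] lemma mul_f (x y : W m) : (x * y).f = x.f + sh m x.p y.f := rfl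
@[simp] lemma mul_p (x y : W m) : (x * y).p = x.p + y.p := rfl
@[simp] lemma one_f : (1 : W m).f = 0 := rfl
@[simp] lemma one_p : (1 : W m).p = 0 := rfl
@[simp] lemma inv_f (x : W m) : (x⁻¹).f = -(sh m (-x.p) x.f) := rfl
@[simp] lemma inv_p (x : W m) : (x⁻¹).p = -x.p := rfl

noncomputable instance : Group (W m) where
  mul_assoc a b c := by
    ext <;> simp [add_assoc]
  one_mul a := by ext <;> simp
  mul_one a := by ext <;> simp
  inv_mul_cancel a := by
    ext x <;> simp
@[simp] lemma mk_f (f : ℤ →₀ ZMod m) (p : ℤ) : (W.mk f p).f = f := rfl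
@[simp] lemma mk_p (f : ℤ →₀ ZMod m) (p : ℤ) : (W.mk f p).p = p := rfl

/-- The lamp generator. -/
noncomputable def A : W m := ⟨Finsupp.single 0 1, 0⟩
/-- The move generator. -/
noncomputable def T : W m := ⟨0, 1⟩

/-- The images of the two generators. -/
noncomputable def gen : Bool → W m := fun b => if b then A m else T m
@[simp] lemma gen_true : gen m true = A m := rfl
@[simp] lemma gen_false : gen m false = T m := rfl

lemma A_pow (k : ℕ) : (A m) ^ k = ⟨Finsupp.single 0 (k : ZMod m), 0⟩ := by
  induction k with
  | zero => apply W.ext <;> simp [Finsupp.single_zero]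
  | succ k ih =>
      rw [pow_succ, ih, A]
      apply W.ext <;> push_cast <;> simp [Finsupp.single_add]

lemma T_pow (k : ℕ) : (T m) ^ k = ⟨0, (k : ℤ)⟩ := by
  induction k with
  | zero => rfl
  | succ k ih => rw [pow_succ, ih, T]; apply W.ext <;> simp

lemma T_zpow (i : ℤ) : (T m) ^ i = ⟨0, i⟩ := by
  induction i using Int.rec with
  | ofNat k => simpa using T_pow m k
  | negSucc k =>
      rw [zpow_negSucc, T_pow]
      apply W.ext <;> simp [Int.negSucc_eq]

lemma conj_eq (i : ℤ) : (T m) ^ i * A m * (T m) ^ (-i) = ⟨Finsupp.single i 1, 0⟩ := by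
  rw [T_zpow, T_zpow, A]
  apply W.ext
  · show 0 + sh m i (Finsupp.single 0 1) + sh m (i + 0) 0 = Finsupp.single i 1
    rw [sh_single, sh_zero, zero_add, zero_add, add_zero]
  · show i + 0 + -i = 0
    ring

lemma lift_rels : ∀ r ∈ lampRels m, FreeGroup.lift (gen m) r = 1 := by
  intro r hr
  rcases hr with h | ⟨i, j, rfl⟩
  · rw [Set.mem_singleton_iff.mp h, map_pow, FreeGroup.lift_apply_of, gen_true, A_pow]
    apply W.ext <;> simp [ZMod.natCast_self, Finsupp.single_zero]
  · rw [map_commutatorElement]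
    simp only [map_mul, map_zpow, FreeGroup.lift_apply_of, gen_true, gen_false]
    rw [commutatorElement_eq_one_iff_mul_comm, conj_eq, conj_eq]
    apply W.ext
    · show Finsupp.single i 1 + sh m 0 (Finsupp.single j 1)
          = Finsupp.single j 1 + sh m 0 (Finsupp.single i 1)
      rw [sh_zero_shift, sh_zero_shift, add_comm]
    · rfl

/-- The projection from the presented lamplighter group to the concrete wreath product. -/
noncomputable def pi : Lamp m →* W m := PresentedGroup.toGroup (lift_rels m)

@[simp] lemma pi_a : pi m (la m) = A m := by
  rw [la, pi, PresentedGroup.toGroup.of, gen_true]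

@[simp] lemma pi_t : pi m (lt m) = T m := by
  rw [lt, pi, PresentedGroup.toGroup.of, gen_false]

/-- The commutation relations hold in the presented group. -/
lemma lamp_rel (i j : ℤ) :
    (lt m ^ i * la m * lt m ^ (-i)) * (lt m ^ j * la m * lt m ^ (-j))
      = (lt m ^ j * la m * lt m ^ (-j)) * (lt m ^ i * la m * lt m ^ (-i)) := by
  have hmem : ⁅FreeGroup.of false ^ i * FreeGroup.of true * FreeGroup.of false ^ (-i),
      FreeGroup.of false ^ j * FreeGroup.of true * FreeGroup.of false ^ (-j)⁆
      ∈ lampRels m := Or.inr ⟨i, j, rfl⟩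
  have h1 : PresentedGroup.mk (lampRels m)
      ⁅FreeGroup.of false ^ i * FreeGroup.of true * FreeGroup.of false ^ (-i),
        FreeGroup.of false ^ j * FreeGroup.of true * FreeGroup.of false ^ (-j)⁆ = 1 := by
    apply (QuotientGroup.eq_one_iff _).mpr
    exact Subgroup.subset_normalClosure hmem
  rw [map_commutatorElement] at h1
  simp only [map_mul, map_zpow] at h1
  have h2 : (PresentedGroup.mk (lampRels m)) (FreeGroup.of false) = lt m := rfl
  have h3 : (PresentedGroup.mk (lampRels m)) (FreeGroup.of true) = la m := rfl
  rw [h2, h3] at h1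
  exact commutatorElement_eq_one_iff_mul_comm.mp h1

lemma max'_eq {s : Finset ℤ} (h : s.Nonempty) {a : ℤ} (ha : a ∈ s) (hb : ∀ b ∈ s, b ≤ a) :
    s.max' h = a :=
  le_antisymm (Finset.max'_le _ _ _ hb) (Finset.le_max' _ _ ha)

lemma min'_eq {s : Finset ℤ} (h : s.Nonempty) {a : ℤ} (ha : a ∈ s) (hb : ∀ b ∈ s, a ≤ b) :
    s.min' h = a :=
  le_antisymm (Finset.min'_le _ _ ha) (Finset.le_min' _ _ _ hb)

lemma max'_congr {s t : Finset ℤ} (h : s = t) (hs : s.Nonempty) (ht : t.Nonempty) :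
    s.max' hs = t.max' ht := by subst h; rfl

lemma min'_congr {s t : Finset ℤ} (h : s = t) (hs : s.Nonempty) (ht : t.Nonempty) :
    s.min' hs = t.min' ht := by subst h; rfl

/-- The extended support of an element: the cursor, the origin and the lit lamps. -/
def BS (w : W m) : Finset ℤ := insert w.p (insert 0 w.f.support)

lemma BS_nonempty (w : W m) : (BS m w).Nonempty := Finset.insert_nonempty _ _

/-- A lower bound for the word length of an element of the wreath product. -/
noncomputable def phi (w : W m) : ℤ :=
  2 * ((BS m w).max' (BS_nonempty m w) - (BS m w).min' (BS_nonempty m w))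
    - |w.p| + w.f.support.card

lemma phi_one : phi m 1 = 0 := by
  have h0 : (0 : ℤ) ∈ BS m 1 := by simp [BS]
  have hb : ∀ b ∈ BS m 1, b = 0 := by
    intro b hb
    simpa [BS, Finsupp.support_zero] using hb
  rw [phi, max'_eq (BS_nonempty m 1) h0 (fun b h => (hb b h).le),
    min'_eq (BS_nonempty m 1) h0 (fun b h => (hb b h).ge)]
  simp [Finsupp.support_zero]

lemma key_arith (M0 m0 p q : ℤ) (hM : 0 ≤ M0) (hm : m0 ≤ 0)
    (h : q = p + 1 ∨ q = p - 1) :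
    2 * (max M0 q - min m0 q) - |q| ≤ 2 * (max M0 p - min m0 p) - |p| + 1 := by
  rcases abs_cases p with ⟨h5, h5'⟩ | ⟨h5, h5'⟩ <;>
  rcases abs_cases q with ⟨h6, h6'⟩ | ⟨h6, h6'⟩ <;>
    rw [h5, h6] <;>
  rcases max_cases M0 q with ⟨h1, h1'⟩ | ⟨h1, h1'⟩ <;>
    rw [h1] <;>
  rcases max_cases M0 p with ⟨h2, h2'⟩ | ⟨h2, h2'⟩ <;>
    rw [h2] <;>
  rcases min_cases m0 q with ⟨h3, h3'⟩ | ⟨h3, h3'⟩ <;>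
    rw [h3] <;>
  rcases min_cases m0 p with ⟨h4, h4'⟩ | ⟨h4, h4'⟩ <;>
    rw [h4] <;>
  omega

lemma phi_shift_le (f : ℤ →₀ ZMod m) (p q : ℤ) (h : q = p + 1 ∨ q = p - 1) :
    phi m ⟨f, q⟩ ≤ phi m ⟨f, p⟩ + 1 := by
  have h0 : (insert (0:ℤ) f.support).Nonempty := Finset.insert_nonempty _ _
  have hmax : ∀ r : ℤ, (BS m ⟨f, r⟩).max' (BS_nonempty m ⟨f, r⟩)
      = max ((insert (0:ℤ) f.support).max' h0) r := by
    intro r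
    apply max'_eq
    · rcases max_cases ((insert (0:ℤ) f.support).max' h0) r with ⟨h1, _⟩ | ⟨h1, _⟩ <;> rw [h1]
      · exact Finset.mem_insert_of_mem (Finset.max'_mem _ _)
      · exact Finset.mem_insert_self _ _
    · intro b hb
      rcases Finset.mem_insert.mp hb with rfl | hb
      · exact le_max_right _ _
      · exact le_trans (Finset.le_max' _ _ hb) (le_max_left _ _)
  have hmin : ∀ r : ℤ, (BS m ⟨f, r⟩).min' (BS_nonempty m ⟨f, r⟩)
      = min ((insert (0:ℤ) f.support).min' h0) r := by
    intro r
    apply min'_eq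
    · rcases min_cases ((insert (0:ℤ) f.support).min' h0) r with ⟨h1, _⟩ | ⟨h1, _⟩ <;> rw [h1]
      · exact Finset.mem_insert_of_mem (Finset.min'_mem _ _)
      · exact Finset.mem_insert_self _ _
    · intro b hb
      rcases Finset.mem_insert.mp hb with rfl | hb
      · exact min_le_right _ _
      · exact le_trans (min_le_left _ _) (Finset.min'_le _ _ hb)
  have hM : 0 ≤ (insert (0:ℤ) f.support).max' h0 :=
    Finset.le_max' _ _ (Finset.mem_insert_self _ _)
  have hm' : (insert (0:ℤ) f.support).min' h0 ≤ 0 :=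
    Finset.min'_le _ _ (Finset.mem_insert_self _ _)
  have hk := key_arith ((insert (0:ℤ) f.support).max' h0) ((insert (0:ℤ) f.support).min' h0)
    p q hM hm' h
  rw [phi, phi, hmax, hmax, hmin, hmin]
  have : (⟨f, q⟩ : W m).f.support.card = (⟨f, p⟩ : W m).f.support.card := rfl
  linarith [hk]

lemma insert_support_add_single (f : ℤ →₀ ZMod m) (p : ℤ) (c : ZMod m) :
    insert p (f + Finsupp.single p c).support = insert p f.support := by
  ext x
  rcases eq_or_ne x p with h | h
  · simp [h]
  · simp only [Finset.mem_insert, h, false_or, Finsupp.mem_support_iff]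
    rw [Finsupp.add_apply, Finsupp.single_eq_of_ne' (Ne.symm h), add_zero]

lemma phi_lamp_le (f : ℤ →₀ ZMod m) (p : ℤ) (c : ZMod m) :
    phi m ⟨f + Finsupp.single p c, p⟩ ≤ phi m ⟨f, p⟩ + 1 := by
  have hBS : BS m ⟨f + Finsupp.single p c, p⟩ = BS m ⟨f, p⟩ := by
    rw [show BS m ⟨f + Finsupp.single p c, p⟩
        = insert p (insert 0 (f + Finsupp.single p c).support) from rfl,
      show BS m ⟨f, p⟩ = insert p (insert 0 f.support) from rfl,
      Finset.insert_comm, Finset.insert_comm p 0, insert_support_add_single]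
  have hcard : (f + Finsupp.single p c).support.card ≤ f.support.card + 1 := by
    have h2 : ((Finsupp.single p c).support).card ≤ ({p} : Finset ℤ).card :=
      Finset.card_le_card Finsupp.support_single_subset
    rw [Finset.card_singleton] at h2
    have h3 : (f + Finsupp.single p c).support.card
        ≤ (f.support ∪ (Finsupp.single p c).support).card :=
      Finset.card_le_card Finsupp.support_add
    have h4 := Finset.card_union_le f.support (Finsupp.single p c).support
    omega
  have hmax := max'_congr hBS (BS_nonempty _ _) (BS_nonempty _ _)
  have hmin := min'_congr hBS (BS_nonempty _ _) (BS_nonempty _ _)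
  rw [phi, phi, hmax, hmin]
  have hc : ((f + Finsupp.single p c).support.card : ℤ) ≤ (f.support.card : ℤ) + 1 := by
    exact_mod_cast hcard
  have : (⟨f + Finsupp.single p c, p⟩ : W m).p = (⟨f, p⟩ : W m).p := rfl
  simp only [this]
  linarith [hc]

lemma phi_mul_gen (w s : W m)
    (hs : s = A m ∨ s = T m ∨ s = (A m)⁻¹ ∨ s = (T m)⁻¹) :
    phi m (w * s) ≤ phi m w + 1 := by
  have hw : phi m w = phi m ⟨w.f, w.p⟩ := rfl
  rcases hs with rfl | rfl | rfl | rfl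
  · have h : w * A m = ⟨w.f + Finsupp.single w.p 1, w.p⟩ := by
      apply W.ext
      · show w.f + sh m w.p (Finsupp.single 0 1) = w.f + Finsupp.single w.p 1
        rw [sh_single, zero_add]
      · show w.p + 0 = w.p
        ring
    rw [h, hw]
    exact phi_lamp_le m w.f w.p 1
  · have h : w * T m = ⟨w.f, w.p + 1⟩ := by
      apply W.ext
      · show w.f + sh m w.p 0 = w.f
        rw [sh_zero, add_zero]
      · rfl
    rw [h, hw]
    exact phi_shift_le m w.f w.p (w.p + 1) (Or.inl rfl)
  · have h : w * (A m)⁻¹ = ⟨w.f + Finsupp.single w.p (-1), w.p⟩ := by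
      apply W.ext
      · show w.f + sh m w.p (-(sh m (-0) (Finsupp.single 0 1))) = w.f + Finsupp.single w.p (-1)
        rw [neg_zero, sh_zero_shift, sh_neg, sh_single, zero_add, ← Finsupp.single_neg]
      · show w.p + -0 = w.p
        ring
    rw [h, hw]
    exact phi_lamp_le m w.f w.p (-1)
  · have h : w * (T m)⁻¹ = ⟨w.f, w.p - 1⟩ := by
      apply W.ext
      · show w.f + sh m w.p (-(sh m (-1) 0)) = w.f
        rw [sh_zero, neg_zero, sh_zero, add_zero]
      · show w.p + -1 = w.p - 1
        ring
    rw [h, hw]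
    exact phi_shift_le m w.f w.p (w.p - 1) (Or.inr rfl)

lemma phi_prod_le (l : List (W m))
    (hl : ∀ s ∈ l, s = A m ∨ s = T m ∨ s = (A m)⁻¹ ∨ s = (T m)⁻¹) :
    phi m l.prod ≤ (l.length : ℤ) := by
  induction l using List.reverseRecOn with
  | nil => simpa using (phi_one m).le
  | append_singleton l s ih =>
      rw [List.prod_append, List.prod_singleton]
      have h1 : phi m (l.prod * s) ≤ phi m l.prod + 1 :=
        phi_mul_gen m l.prod s (hl s (by simp))
      have h2 : phi m l.prod ≤ (l.length : ℤ) :=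
        ih (fun x hx => hl x (by simp [hx]))
      rw [List.length_append, List.length_singleton]
      push_cast
      linarith

lemma gens_map (x : Lamp m)
    (hx : x ∈ ({la m, lt m} : Set (Lamp m)) ∨ x⁻¹ ∈ ({la m, lt m} : Set (Lamp m))) :
    pi m x = A m ∨ pi m x = T m ∨ pi m x = (A m)⁻¹ ∨ pi m x = (T m)⁻¹ := by
  rcases hx with hx | hx
  · rcases hx with rfl | hx
    · exact Or.inl (pi_a m)
    · rw [Set.mem_singleton_iff.mp hx]
      exact Or.inr (Or.inl (pi_t m))
  · rcases hx with hx | hx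
    · have : x = (la m)⁻¹ := by rw [← hx]; simp
      subst this
      refine Or.inr (Or.inr (Or.inl ?_))
      rw [map_inv, pi_a]
    · have : x = (lt m)⁻¹ := by rw [← Set.mem_singleton_iff.mp hx]; simp
      subst this
      refine Or.inr (Or.inr (Or.inr ?_))
      rw [map_inv, pi_t]

lemma wordLength_le (g : Lamp m) (l : List (Lamp m))
    (hval : ∀ x ∈ l, x ∈ ({la m, lt m} : Set (Lamp m)) ∨ x⁻¹ ∈ ({la m, lt m} : Set (Lamp m)))
    (hprod : l.prod = g) :
    wordLength {la m, lt m} g ≤ l.length :=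
  Nat.sInf_le ⟨l, hval, rfl, hprod⟩

lemma wordLength_eq (g : Lamp m) (N : ℕ) (hphi : (N : ℤ) ≤ phi m (pi m g))
    (l : List (Lamp m))
    (hval : ∀ x ∈ l, x ∈ ({la m, lt m} : Set (Lamp m)) ∨ x⁻¹ ∈ ({la m, lt m} : Set (Lamp m)))
    (hlen : l.length = N) (hprod : l.prod = g) :
    wordLength {la m, lt m} g = N := by
  apply le_antisymm
  · rw [← hlen]
    exact wordLength_le m g l hval hprod
  · apply le_csInf
    · exact ⟨N, l, hval, hlen, hprod⟩
    rintro b ⟨l', hv', hl', hp'⟩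
    have hmap : ∀ s ∈ l'.map (pi m),
        s = A m ∨ s = T m ∨ s = (A m)⁻¹ ∨ s = (T m)⁻¹ := by
      rintro s hs
      obtain ⟨x, hx, rfl⟩ := List.mem_map.mp hs
      exact gens_map m x (hv' x hx)
    have hb := phi_prod_le m (l'.map (pi m)) hmap
    rw [← map_list_prod, hp', List.length_map, hl'] at hb
    exact_mod_cast le_trans hphi hb

/-- The element `tⁿ a t⁻²ⁿ a`. -/
noncomputable def en (n : ℕ) : Lamp m := lt m ^ n * la m * (lt m ^ (2 * n))⁻¹ * la m

lemma pi_en_tk (n k : ℕ) :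
    pi m (en m n * lt m ^ k)
      = ⟨Finsupp.single (n : ℤ) 1 + Finsupp.single (-(n : ℤ)) 1, -(n : ℤ) + (k : ℤ)⟩ := by
  rw [en]
  simp only [map_mul, map_pow, map_inv, pi_a, pi_t, T_pow, A]
  apply W.ext
  · simp only [mul_f, mul_p, inv_f, inv_p, mk_f, mk_p, sh_zero, neg_zero, add_zero,
      zero_add, sh_single, sh_neg]
    have h2 : (n : ℤ) + -((2 * n : ℕ) : ℤ) = -(n : ℤ) := by push_cast; ring
    rw [h2]
  · simp only [mul_p, inv_p, mk_p, add_zero]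
    push_cast
    ring

lemma phi_val (hm : 2 ≤ m) (n k : ℕ) (hn : 1 ≤ n) (hk : k ≤ n) :
    phi m ⟨Finsupp.single (n : ℤ) 1 + Finsupp.single (-(n : ℤ)) 1, -(n : ℤ) + (k : ℤ)⟩
      = 3 * n + k + 2 := by
  haveI : Fact (1 < m) := ⟨hm⟩
  have h1 : (1 : ZMod m) ≠ 0 := one_ne_zero
  have hne : (n : ℤ) ≠ -(n : ℤ) := by omega
  have hsupp : (Finsupp.single (n : ℤ) 1 + Finsupp.single (-(n : ℤ)) (1 : ZMod m)).support
      = {(n : ℤ), -(n : ℤ)} := by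
    rw [Finsupp.support_add_eq, Finsupp.support_single_ne_zero _ h1,
      Finsupp.support_single_ne_zero _ h1]
    · ext b; simp [or_comm]
    rw [Finsupp.support_single_ne_zero _ h1, Finsupp.support_single_ne_zero _ h1]
    exact Finset.disjoint_singleton.mpr hne
  have hmem : ∀ b : ℤ, b ∈ BS m ⟨Finsupp.single (n : ℤ) 1 + Finsupp.single (-(n : ℤ)) 1,
      -(n : ℤ) + (k : ℤ)⟩ ↔ (b = -(n:ℤ) + k ∨ b = 0 ∨ b = n ∨ b = -(n:ℤ)) := by
    intro b
    rw [show BS m ⟨Finsupp.single (n : ℤ) 1 + Finsupp.single (-(n : ℤ)) 1, -(n : ℤ) + (k : ℤ)⟩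
      = insert (-(n:ℤ) + k) (insert 0
        (Finsupp.single (n : ℤ) 1 + Finsupp.single (-(n : ℤ)) (1 : ZMod m)).support) from rfl,
      hsupp]
    simp [Finset.mem_insert]
  have hmax : (BS m ⟨Finsupp.single (n : ℤ) 1 + Finsupp.single (-(n : ℤ)) 1,
      -(n : ℤ) + (k : ℤ)⟩).max' (BS_nonempty m _) = (n : ℤ) := by
    apply max'_eq
    · rw [hmem]; omega
    · intro b hb; rw [hmem] at hb; omega
  have hmin : (BS m ⟨Finsupp.single (n : ℤ) 1 + Finsupp.single (-(n : ℤ)) 1,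
      -(n : ℤ) + (k : ℤ)⟩).min' (BS_nonempty m _) = -(n : ℤ) := by
    apply min'_eq
    · rw [hmem]; omega
    · intro b hb; rw [hmem] at hb; omega
  have hcard : (Finsupp.single (n : ℤ) 1 + Finsupp.single (-(n : ℤ)) (1 : ZMod m)).support.card
      = 2 := by
    rw [hsupp, Finset.card_insert_of_notMem (by simpa using hne), Finset.card_singleton]
  rw [phi, hmax, hmin]
  have habs : |(⟨Finsupp.single (n : ℤ) 1 + Finsupp.single (-(n : ℤ)) 1,
      -(n : ℤ) + (k : ℤ)⟩ : W m).p| = (n : ℤ) - k := by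
    rw [mk_p, abs_of_nonpos (by omega)]
    ring
  rw [habs]
  rw [show (⟨Finsupp.single (n : ℤ) 1 + Finsupp.single (-(n : ℤ)) 1,
      -(n : ℤ) + (k : ℤ)⟩ : W m).f
    = Finsupp.single (n : ℤ) 1 + Finsupp.single (-(n : ℤ)) 1 from rfl, hcard]
  push_cast
  ring

lemma wordA_spec (n k : ℕ) :
    ∃ l : List (Lamp m),
      (∀ x ∈ l, x ∈ ({la m, lt m} : Set (Lamp m)) ∨ x⁻¹ ∈ ({la m, lt m} : Set (Lamp m))) ∧
      l.length = 3 * n + k + 2 ∧ l.prod = en m n * lt m ^ k := by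
  refine ⟨List.replicate n (lt m) ++ [la m] ++ List.replicate (2 * n) (lt m)⁻¹
    ++ [la m] ++ List.replicate k (lt m), ?_, ?_, ?_⟩
  · intro x hx
    simp only [List.mem_append, List.mem_replicate, List.mem_singleton] at hx
    rcases hx with ((((⟨-, rfl⟩ | rfl) | ⟨-, rfl⟩) | rfl) | ⟨-, rfl⟩)
    · exact Or.inl (Or.inr rfl)
    · exact Or.inl (Or.inl rfl)
    · exact Or.inr (by rw [inv_inv]; exact Or.inr rfl)
    · exact Or.inl (Or.inl rfl)
    · exact Or.inl (Or.inr rfl)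
  · simp only [List.length_append, List.length_replicate, List.length_singleton]
    omega
  · simp only [List.prod_append, List.prod_replicate, List.prod_singleton]
    rw [inv_pow, en]

lemma wl_en_tk (hm : 2 ≤ m) (n k : ℕ) (hn : 1 ≤ n) (hk : k ≤ n) :
    wordLength {la m, lt m} (en m n * lt m ^ k) = 3 * n + k + 2 := by
  obtain ⟨l, hval, hlen, hprod⟩ := wordA_spec m n k
  apply wordLength_eq m _ _ _ l hval hlen hprod
  rw [pi_en_tk, phi_val m hm n k hn hk]
  omega

lemma en_t_succ (n : ℕ) (hn : 1 ≤ n) :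
    en m n * lt m ^ (n + 1)
      = ((lt m)⁻¹) ^ n * la m * lt m ^ (2 * n) * la m * ((lt m)⁻¹) ^ (n - 1) := by
  have hc := lamp_rel m (n : ℤ) (-(n : ℤ))
  rw [neg_neg] at hc
  have h1 : en m n * lt m ^ (n + 1)
      = (lt m ^ ((n:ℤ)) * la m * lt m ^ (-(n:ℤ)))
        * (lt m ^ (-(n:ℤ)) * la m * lt m ^ ((n:ℤ))) * lt m := by
    rw [en, ← zpow_natCast (lt m) n, ← zpow_natCast (lt m) (2 * n),
      ← zpow_natCast (lt m) (n + 1)]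
    push_cast
    group
  have h2 : ((lt m)⁻¹) ^ n * la m * lt m ^ (2 * n) * la m * ((lt m)⁻¹) ^ (n - 1)
      = (lt m ^ (-(n:ℤ)) * la m * lt m ^ ((n:ℤ)))
        * (lt m ^ ((n:ℤ)) * la m * lt m ^ (-(n:ℤ))) * lt m := by
    rw [inv_pow, inv_pow, ← zpow_natCast (lt m) n, ← zpow_natCast (lt m) (2 * n),
      ← zpow_natCast (lt m) (n - 1), show ((n - 1 : ℕ) : ℤ) = (n : ℤ) - 1 by omega]
    push_cast
    group
  rw [h1, h2, hc]

lemma wl_en_t_succ_le (n : ℕ) (hn : 1 ≤ n) :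
    wordLength {la m, lt m} (en m n * lt m ^ (n + 1)) ≤ 4 * n + 1 := by
  have hprod : (List.replicate n (lt m)⁻¹ ++ [la m] ++ List.replicate (2 * n) (lt m)
      ++ [la m] ++ List.replicate (n - 1) (lt m)⁻¹).prod = en m n * lt m ^ (n + 1) := by
    simp only [List.prod_append, List.prod_replicate, List.prod_singleton]
    rw [en_t_succ m n hn]
  have hle := wordLength_le m (en m n * lt m ^ (n + 1)) _ ?_ hprod
  · refine le_trans hle ?_
    simp only [List.length_append, List.length_replicate, List.length_singleton]
    omega
  · intro x hx
    simp only [List.mem_append, List.mem_replicate, List.mem_singleton] at hx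
    rcases hx with ((((⟨-, rfl⟩ | rfl) | ⟨-, rfl⟩) | rfl) | ⟨-, rfl⟩)
    · exact Or.inr (by rw [inv_inv]; exact Or.inr rfl)
    · exact Or.inl (Or.inl rfl)
    · exact Or.inl (Or.inr rfl)
    · exact Or.inl (Or.inl rfl)
    · exact Or.inr (by rw [inv_inv]; exact Or.inr rfl)

lemma mem_cone (hm : 2 ≤ m) (n j : ℕ) (hn : 1 ≤ n) (hj : j ≤ n) :
    List.replicate j (lt m) ∈ coneType {la m, lt m} (en m n) := by
  constructor
  · intro x hx
    rw [List.eq_of_mem_replicate hx]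
    exact Or.inl (Or.inr rfl)
  · intro k hk
    rw [List.length_replicate] at hk
    rw [List.take_replicate, List.prod_replicate, min_eq_left hk]
    have h0 := wl_en_tk m hm n 0 hn (Nat.zero_le n)
    rw [pow_zero, mul_one] at h0
    rw [wl_en_tk m hm n k hn (le_trans hk hj), h0]
    omega

lemma not_mem_cone (hm : 2 ≤ m) (n : ℕ) (hn : 1 ≤ n) :
    List.replicate (n + 1) (lt m) ∉ coneType {la m, lt m} (en m n) := by
  rintro ⟨-, h2⟩
  have h := h2 (n + 1) (by rw [List.length_replicate])
  rw [List.take_replicate, List.prod_replicate, min_self] at h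
  have hub := wl_en_t_succ_le m n hn
  have h0 := wl_en_tk m hm n 0 hn (Nat.zero_le n)
  rw [pow_zero, mul_one] at h0
  omega

lemma cone_ne (hm : 2 ≤ m) (n₁ n₂ : ℕ) (h1 : 1 ≤ n₁) (h2 : 1 ≤ n₂) (hlt : n₁ < n₂) :
    coneType {la m, lt m} (en m n₁) ≠ coneType {la m, lt m} (en m n₂) := by
  intro h
  apply not_mem_cone m hm n₁ h1
  rw [h]
  exact mem_cone m hm n₂ (n₁ + 1) h2 hlt

end LampProof

/-- The lamplighter group `L_m` (`m ≥ 2`) has infinitely many cone types with respect to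
the wreath product generating set `{a, t}`.  In particular the elements
`tⁿ a t⁻²ⁿ a` have pairwise distinct cone types, since the cone type of `tⁿ a t⁻²ⁿ a`
contains `tⁿ` but not `tⁿ⁺¹`. -/
theorem lamplighter_infinitely_many_cone_types (m : ℕ) (hm : 2 ≤ m) :
    letI S : Set (Lamp m) := {la m, lt m}
    letI e : ℕ → Lamp m := fun n => lt m ^ n * la m * (lt m ^ (2 * n))⁻¹ * la m
    Set.Infinite (Set.range (coneType S)) ∧
    (∀ n : ℕ, 1 ≤ n → List.replicate n (lt m) ∈ coneType S (e n) ∧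
      List.replicate (n + 1) (lt m) ∉ coneType S (e n)) ∧
    (∀ n₁ n₂ : ℕ, 1 ≤ n₁ → 1 ≤ n₂ → n₁ ≠ n₂ → coneType S (e n₁) ≠ coneType S (e n₂)) := by
  refine ⟨?_, ?_, ?_⟩
  · have hinj : Function.Injective
        (fun n : ℕ => coneType {la m, lt m} (LampProof.en m (n + 1))) := by
      intro x y hxy
      by_contra hne
      rcases Nat.lt_or_ge x y with h | h
      · exact LampProof.cone_ne m hm (x + 1) (y + 1) (by omega) (by omega) (by omega) hxy
      · have h' : y < x := by omega
        exact LampProof.cone_ne m hm (y + 1) (x + 1) (by omega) (by omega) (by omega) hxy.symm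
    exact Set.infinite_of_injective_forall_mem hinj
      (fun n => ⟨LampProof.en m (n + 1), rfl⟩)
  · intro n hn
    exact ⟨LampProof.mem_cone m hm n n hn le_rfl, LampProof.not_mem_cone m hm n hn⟩
  · intro n₁ n₂ h1 h2 hne
    rcases Nat.lt_or_ge n₁ n₂ with h | h
    · exact LampProof.cone_ne m hm n₁ n₂ h1 h2 h
    · have h' : n₂ < n₁ := by omega
      exact fun hc => LampProof.cone_ne m hm n₂ n₁ h2 h1 h' hc.symm
end

section
/- Let w ∈ L₂ = ℤ₂ ≀ ℤ have normal form a_{i₁} ⋯ a_{i_m} a_{−j₁} ⋯ a_{−j_l} t^r with 0 < i₁ < ⋯ < i_m and 0 ≤ j₁ < ⋯ < j_l. Then the word length of w with respect to the automata generating set {t, ta} is D'(w), where D'(w) = i_m + |r − i_m| if l = 0, and D'(w) = min(2(j_l + 1) + i_m + |r − i_m|, 2 i_m + j_l + 1 + |r + j_l + 1|) otherwise. -/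
open scoped commutatorElement

namespace LampWL

/-! ### A concrete model of the lamplighter group -/

def shift (c : ℤ) (f : ℤ →₀ ZMod 2) : ℤ →₀ ZMod 2 :=
  Finsupp.equivMapDomain (Equiv.addRight c) f

@[simp] lemma shift_apply (c : ℤ) (f : ℤ →₀ ZMod 2) (x : ℤ) : shift c f x = f (x - c) := by
  simp [shift, Finsupp.equivMapDomain_apply, Equiv.addRight]; rfl

@[simp] lemma shift_add (c : ℤ) (f g : ℤ →₀ ZMod 2) : shift c (f + g) = shift c f + shift c g := by
  ext x; simp

@[simp] lemma shift_zero (c : ℤ) : shift c (0 : ℤ →₀ ZMod 2) = 0 := by ext x; simp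

@[simp] lemma shift_shift (c d : ℤ) (f : ℤ →₀ ZMod 2) : shift c (shift d f) = shift (c + d) f := by
  ext x; simp; ring_nf

@[simp] lemma shift_zero' (f : ℤ →₀ ZMod 2) : shift 0 f = f := by ext x; simp

@[simp] lemma shift_neg (c : ℤ) (f : ℤ →₀ ZMod 2) : shift c (-f) = -(shift c f) := by ext x; simp

@[simp] lemma shift_single (c a : ℤ) :
    shift c (Finsupp.single a 1 : ℤ →₀ ZMod 2) = Finsupp.single (a + c) 1 := by
  ext x
  rw [shift_apply]
  rcases eq_or_ne x (a + c) with h | h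
  · subst h; simp
  · rw [Finsupp.single_apply_eq_zero.2, Finsupp.single_apply_eq_zero.2] <;> omega

@[ext] structure LL where
  f : ℤ →₀ ZMod 2
  c : ℤ

noncomputable instance : Mul LL := ⟨fun a b => ⟨a.f + shift a.c b.f, a.c + b.c⟩⟩
noncomputable instance : One LL := ⟨⟨0, 0⟩⟩
noncomputable instance : Inv LL := ⟨fun a => ⟨shift (-a.c) (-a.f), -a.c⟩⟩

@[simp] lemma mul_f (a b : LL) : (a * b).f = a.f + shift a.c b.f := rfl
@[simp] lemma mul_c (a b : LL) : (a * b).c = a.c + b.c := rfl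
@[simp] lemma one_f : (1 : LL).f = 0 := rfl
@[simp] lemma one_c : (1 : LL).c = 0 := rfl
@[simp] lemma inv_f (a : LL) : (a⁻¹).f = shift (-a.c) (-a.f) := rfl
@[simp] lemma inv_c (a : LL) : (a⁻¹).c = -a.c := rfl

lemma mk_mul (f g : ℤ →₀ ZMod 2) (c d : ℤ) :
    (⟨f, c⟩ : LL) * ⟨g, d⟩ = ⟨f + shift c g, c + d⟩ := rfl

noncomputable instance : Group LL where
  mul_assoc a b c := by
    ext x
    · simp [add_assoc, add_comm, add_left_comm, sub_sub]
    · simp [add_assoc]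
  one_mul a := by ext x <;> simp
  mul_one a := by ext x <;> simp
  inv_mul_cancel a := by ext x <;> simp

noncomputable def tE : LL := ⟨0, 1⟩
noncomputable def aE : LL := ⟨Finsupp.single 0 1, 0⟩
noncomputable def uE : LL := ⟨Finsupp.single 1 1, 1⟩
noncomputable def lampE (k : ℤ) : LL := ⟨Finsupp.single k 1, 0⟩

noncomputable def tmap : Multiplicative ℤ →* LL where
  toFun z := ⟨0, z.toAdd⟩
  map_one' := by ext x <;> simp
  map_mul' a b := by ext x <;> simp

@[simp] lemma tE_zpow (k : ℤ) : tE ^ k = (⟨0, k⟩ : LL) := by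
  have h1 : tE = tmap (Multiplicative.ofAdd 1) := by ext x <;> simp [tE, tmap]
  have h2 : tE ^ k = tmap (Multiplicative.ofAdd 1 ^ k) := by rw [map_zpow, h1]
  rw [h2, show (Multiplicative.ofAdd (1:ℤ)) ^ k = Multiplicative.ofAdd k by
    simp [← ofAdd_zsmul]]
  ext x <;> simp [tmap]

lemma aE_mul_aE : aE * aE = 1 := by
  rw [aE, mk_mul]
  ext x
  · simp [CharTwo.add_self_eq_zero]
  · simp

lemma uE_eq : uE = tE * aE := by
  rw [tE, aE, mk_mul, uE]
  simp only [zero_add, add_zero, shift_single]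

lemma lampE_eq (k : ℤ) : lampE k = tE ^ k * aE * tE ^ (-k) := by
  rw [tE_zpow, tE_zpow, aE, mk_mul, mk_mul, lampE]
  simp only [zero_add, add_zero, shift_zero, shift_single, add_neg_cancel]

lemma lampE_mul (p q : ℤ) :
    lampE p * lampE q = ⟨Finsupp.single p 1 + Finsupp.single q 1, 0⟩ := by
  rw [lampE, lampE, mk_mul]; simp

lemma lampE_comm (p q : ℤ) : Commute (lampE p) (lampE q) := by
  unfold Commute SemiconjBy
  rw [lampE_mul, lampE_mul, add_comm]

/-! ### The homomorphism from the presented group to the model -/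

noncomputable def psi : Lamp 2 →* LL :=
  PresentedGroup.toGroup (f := fun b => if b then aE else tE) (by
    rintro r (h | ⟨p, q, rfl⟩)
    · simp only [Set.mem_singleton_iff] at h
      subst h
      rw [map_pow]
      simp only [FreeGroup.lift_apply_of, if_pos]
      rw [pow_two, aE_mul_aE]
    · rw [map_commutatorElement, commutatorElement_eq_one_iff_commute]
      have key : ∀ z : ℤ, (FreeGroup.lift fun b => if b then aE else tE)
          (FreeGroup.of false ^ z * FreeGroup.of true * FreeGroup.of false ^ (-z)) = lampE z := by
        intro z
        rw [map_mul, map_mul, map_zpow, map_zpow]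
        simp only [FreeGroup.lift_apply_of, if_pos, if_neg Bool.false_ne_true]
        exact (lampE_eq z).symm
      rw [key, key]
      exact lampE_comm p q)

@[simp] lemma psi_lt : psi (lt 2) = tE := by
  rw [lt, psi, PresentedGroup.toGroup.of]; rfl

@[simp] lemma psi_la : psi (la 2) = aE := by
  rw [la, psi, PresentedGroup.toGroup.of]; rfl

@[simp] lemma psi_lampA (k : ℤ) : psi (lampA k) = lampE k := by
  rw [lampA, map_mul, map_mul, map_zpow, map_zpow, psi_lt, psi_la, lampE_eq]

lemma psi_u : psi (lt 2 * la 2) = uE := by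
  rw [map_mul, psi_lt, psi_la, uE_eq]

/-! ### The length functional and its Lipschitz property -/

def Af (f : ℤ →₀ ZMod 2) : ℕ := f.support.sup Int.toNat
def Bf (f : ℤ →₀ ZMod 2) : ℕ := f.support.sup fun x => (1 - x).toNat

lemma le_Af {f : ℤ →₀ ZMod 2} {x : ℤ} (hx : x ∈ f.support) : x ≤ (Af f : ℤ) := by
  have h2 : x.toNat ≤ f.support.sup Int.toNat := Finset.le_sup hx
  unfold Af
  omega

lemma Af_le {f : ℤ →₀ ZMod 2} {mm : ℤ} (hm : 0 ≤ mm) (h : ∀ x ∈ f.support, x ≤ mm) :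
    (Af f : ℤ) ≤ mm := by
  have : Af f ≤ mm.toNat := Finset.sup_le fun x hx => by have := h x hx; omega
  omega

lemma le_Bf {f : ℤ →₀ ZMod 2} {x : ℤ} (hx : x ∈ f.support) : 1 - x ≤ (Bf f : ℤ) := by
  have h2 := Finset.le_sup (f := fun x : ℤ => (1 - x).toNat) hx
  unfold Bf
  omega

lemma Bf_le {f : ℤ →₀ ZMod 2} {mm : ℤ} (hm : 0 ≤ mm) (h : ∀ x ∈ f.support, 1 - x ≤ mm) :
    (Bf f : ℤ) ≤ mm := by
  have : Bf f ≤ mm.toNat := Finset.sup_le fun x hx => by have := h x hx; omega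
  omega

noncomputable def phi (g : LL) : ℤ :=
  min (2 * (Bf g.f : ℤ) + (Af g.f : ℤ) + |g.c - (Af g.f : ℤ)|)
      (2 * (Af g.f : ℤ) + (Bf g.f : ℤ) + |g.c + (Bf g.f : ℤ)|)

lemma arith_step (A B A' B' r r' q : ℤ) (hA : 0 ≤ A) (hB : 0 ≤ B) (hA' : 0 ≤ A') (hB' : 0 ≤ B')
    (h1 : A' ≤ max A (max q 0)) (h2 : B' ≤ max B (max (1 - q) 0))
    (hq : q = max r r') (hd : r' = r + 1 ∨ r' = r - 1) :
    min (2*B' + A' + |r' - A'|) (2*A' + B' + |r' + B'|) ≤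
      min (2*B + A + |r - A|) (2*A + B + |r + B|) + 1 := by
  simp only [abs_eq_max_neg]
  omega

lemma Af_add_single (f : ℤ →₀ ZMod 2) (q : ℤ) :
    (Af (f + Finsupp.single q 1) : ℤ) ≤ max (Af f : ℤ) (max q 0) := by
  apply Af_le
  · have : (0:ℤ) ≤ (Af f : ℤ) := Int.natCast_nonneg _
    omega
  · intro x hx
    have hx' := Finset.mem_of_subset Finsupp.support_add hx
    rw [Finset.mem_union] at hx'
    rcases hx' with hx' | hx'
    · have := le_Af hx'; omega
    · have := Finsupp.support_single_subset hx'
      simp only [Finset.mem_singleton] at this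
      subst this
      omega

lemma Bf_add_single (f : ℤ →₀ ZMod 2) (q : ℤ) :
    (Bf (f + Finsupp.single q 1) : ℤ) ≤ max (Bf f : ℤ) (max (1 - q) 0) := by
  apply Bf_le
  · have : (0:ℤ) ≤ (Bf f : ℤ) := Int.natCast_nonneg _
    omega
  · intro x hx
    have hx' := Finset.mem_of_subset Finsupp.support_add hx
    rw [Finset.mem_union] at hx'
    rcases hx' with hx' | hx'
    · have := le_Bf hx'; omega
    · have := Finsupp.support_single_subset hx'
      simp only [Finset.mem_singleton] at this
      subst this
      omega

lemma phi_mk (f : ℤ →₀ ZMod 2) (c : ℤ) :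
    phi ⟨f, c⟩ = min (2 * (Bf f : ℤ) + (Af f : ℤ) + |c - (Af f : ℤ)|)
      (2 * (Af f : ℤ) + (Bf f : ℤ) + |c + (Bf f : ℤ)|) := rfl

lemma phi_mul_le (g e : LL) (he : e = tE ∨ e = tE⁻¹ ∨ e = uE ∨ e = uE⁻¹) :
    phi (g * e) ≤ phi g + 1 := by
  obtain ⟨f, c⟩ := g
  have hAnn : (0:ℤ) ≤ (Af f : ℤ) := Int.natCast_nonneg _
  have hBnn : (0:ℤ) ≤ (Bf f : ℤ) := Int.natCast_nonneg _
  rcases he with rfl | rfl | rfl | rfl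
  · -- t : move right, no toggle
    have : (⟨f, c⟩ : LL) * tE = ⟨f, c + 1⟩ := by
      rw [tE, mk_mul]; simp
    rw [this, phi_mk, phi_mk]
    exact arith_step _ _ _ _ c (c+1) (c+1) hAnn hBnn hAnn hBnn (le_max_left _ _)
      (le_max_left _ _) (by omega) (Or.inl rfl)
  · -- t⁻¹ : move left, no toggle
    have : (⟨f, c⟩ : LL) * tE⁻¹ = ⟨f, c - 1⟩ := by
      refine LL.ext ?_ ?_
      · show f + shift c (shift (-(1:ℤ)) (-(0 : ℤ →₀ ZMod 2))) = f
        simp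
      · show c + -(1:ℤ) = c - 1
        ring
    rw [this, phi_mk, phi_mk]
    exact arith_step _ _ _ _ c (c-1) c hAnn hBnn hAnn hBnn (le_max_left _ _)
      (le_max_left _ _) (by omega) (Or.inr rfl)
  · -- ta : move right, toggle at c+1
    have : (⟨f, c⟩ : LL) * uE = ⟨f + Finsupp.single (c+1) 1, c + 1⟩ := by
      rw [uE, mk_mul, shift_single, add_comm (1:ℤ) c]
    rw [this, phi_mk, phi_mk]
    exact arith_step _ _ _ _ c (c+1) (c+1) hAnn hBnn (Int.natCast_nonneg _) (Int.natCast_nonneg _)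
      (Af_add_single f (c+1)) (Bf_add_single f (c+1)) (by omega) (Or.inl rfl)
  · -- (ta)⁻¹ : toggle at c, move left
    have huinv : uE⁻¹ = (⟨Finsupp.single 0 1, -1⟩ : LL) := by
      have hneg : -(Finsupp.single (1:ℤ) (1 : ZMod 2)) = Finsupp.single 1 1 := by
        ext x
        rw [Finsupp.neg_apply, CharTwo.neg_eq]
      refine LL.ext ?_ rfl
      show shift (-(1:ℤ)) (-(Finsupp.single 1 1)) = Finsupp.single 0 1
      rw [hneg, shift_single]
      norm_num
    have : (⟨f, c⟩ : LL) * uE⁻¹ = ⟨f + Finsupp.single c 1, c - 1⟩ := by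
      rw [huinv, mk_mul, shift_single, zero_add]
      congr 1
    rw [this, phi_mk, phi_mk]
    exact arith_step _ _ _ _ c (c-1) c hAnn hBnn (Int.natCast_nonneg _) (Int.natCast_nonneg _)
      (Af_add_single f c) (Bf_add_single f c) (by omega) (Or.inr rfl)

lemma phi_one : phi 1 = 0 := by
  have h0 : (1 : LL) = ⟨0, 0⟩ := rfl
  rw [h0, phi_mk]
  simp [Af, Bf]

lemma psi_letter {x : Lamp 2}
    (hx : x ∈ ({lt 2, lt 2 * la 2} : Set (Lamp 2)) ∨ x⁻¹ ∈ ({lt 2, lt 2 * la 2} : Set (Lamp 2))) :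
    psi x = tE ∨ psi x = tE⁻¹ ∨ psi x = uE ∨ psi x = uE⁻¹ := by
  rcases hx with hx | hx
  · rcases hx with rfl | hx
    · exact Or.inl psi_lt
    · rw [Set.mem_singleton_iff] at hx
      subst hx
      exact Or.inr (Or.inr (Or.inl psi_u))
  · rcases hx with hx | hx
    · have : x = (lt 2)⁻¹ := by rw [← hx]; simp
      subst this
      rw [map_inv, psi_lt]
      exact Or.inr (Or.inl rfl)
    · rw [Set.mem_singleton_iff] at hx
      have : x = (lt 2 * la 2)⁻¹ := by rw [← hx]; simp
      subst this
      rw [map_inv, psi_u]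
      exact Or.inr (Or.inr (Or.inr rfl))

lemma phi_list (L : List (Lamp 2))
    (hL : ∀ x ∈ L, x ∈ ({lt 2, lt 2 * la 2} : Set (Lamp 2)) ∨
      x⁻¹ ∈ ({lt 2, lt 2 * la 2} : Set (Lamp 2))) :
    phi (psi L.prod) ≤ L.length := by
  induction L using List.reverseRecOn with
  | nil => simp [phi_one]
  | append_singleton L x IH =>
    rw [List.prod_append, List.prod_singleton, map_mul]
    have h1 : phi (psi L.prod * psi x) ≤ phi (psi L.prod) + 1 :=
      phi_mul_le _ _ (psi_letter (hL x (by simp)))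
    have h2 : phi (psi L.prod) ≤ L.length := IH fun y hy => hL y (by simp [hy])
    simp only [List.length_append, List.length_singleton]
    push_cast
    omega

/-! ### Computing `psi` of the normal form -/

lemma psi_mapProd (c : List ℤ) :
    psi ((c.map lampA).prod) = ⟨(c.map fun p => Finsupp.single p 1).sum, 0⟩ := by
  induction c with
  | nil => rfl
  | cons a c IH =>
    rw [List.map_cons, List.prod_cons, map_mul, psi_lampA, IH, List.map_cons, List.sum_cons,
      lampE, mk_mul]
    simp

lemma supp_sum (c : List ℤ) (hc : c.Nodup) :
    ((c.map fun p => Finsupp.single p 1).sum : ℤ →₀ ZMod 2).support = c.toFinset := by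
  induction c with
  | nil => simp
  | cons a c IH =>
    rw [List.map_cons, List.sum_cons]
    have hnd := List.nodup_cons.1 hc
    have hsingle : (Finsupp.single a 1 : ℤ →₀ ZMod 2).support = {a} :=
      Finsupp.support_single_ne_zero a one_ne_zero
    rw [Finsupp.support_add_eq, hsingle, IH hnd.2, List.toFinset_cons]
    · ext x; simp [or_comm]
    · rw [hsingle, IH hnd.2]
      simp only [Finset.disjoint_singleton_left, List.mem_toFinset]
      exact hnd.1

/-! ### Relations in the presented group -/

lemma rel_one {x : FreeGroup Bool} (hx : x ∈ lampRels 2) :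
    PresentedGroup.mk (lampRels 2) x = 1 := by
  exact (QuotientGroup.eq_one_iff x).2 (Subgroup.subset_normalClosure hx)

lemma la_sq : la 2 * la 2 = 1 := by
  have : la 2 * la 2 = PresentedGroup.mk (lampRels 2) (FreeGroup.of true ^ 2) := by
    rw [pow_two, map_mul]; rfl
  rw [this]
  exact rel_one (Or.inl rfl)

lemma la_inv : (la 2)⁻¹ = la 2 := inv_eq_of_mul_eq_one_right la_sq

lemma lampA_mk (p : ℤ) : lampA p = PresentedGroup.mk (lampRels 2)
    (FreeGroup.of false ^ p * FreeGroup.of true * FreeGroup.of false ^ (-p)) := by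
  rw [map_mul, map_mul, map_zpow, map_zpow]; rfl

lemma commA (p q : ℤ) : Commute (lampA p) (lampA q) := by
  rw [← commutatorElement_eq_one_iff_commute, lampA_mk, lampA_mk, ← map_commutatorElement]
  exact rel_one (Or.inr ⟨p, q, rfl⟩)

lemma commA_prods (L1 L2 : List ℤ) :
    Commute ((L1.map lampA).prod) ((L2.map lampA).prod) := by
  apply Commute.list_prod_right
  intro x hx
  apply Commute.list_prod_left
  intro y hy
  simp only [List.mem_map] at hx hy
  obtain ⟨p, _, rfl⟩ := hy
  obtain ⟨q, _, rfl⟩ := hx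
  exact commA p q

/-! ### Explicit geodesic words -/

noncomputable def padT (n : ℕ) : List (Lamp 2) := List.replicate n (lt 2)
noncomputable def padTi (n : ℕ) : List (Lamp 2) := List.replicate n (lt 2)⁻¹

lemma padT_prod (n : ℕ) : (padT n).prod = lt 2 ^ (n : ℤ) := by
  rw [padT, List.prod_replicate, zpow_natCast]

lemma padTi_prod (n : ℕ) : (padTi n).prod = lt 2 ^ (-(n : ℤ)) := by
  rw [padTi, List.prod_replicate, inv_pow, ← zpow_natCast, ← zpow_neg]

noncomputable def tzword (z : ℤ) : List (Lamp 2) := if 0 ≤ z then padT z.toNat else padTi (-z).toNat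

lemma tzword_prod (z : ℤ) : (tzword z).prod = lt 2 ^ z := by
  rw [tzword]
  split
  · rw [padT_prod]; congr 1; omega
  · rw [padTi_prod]; congr 1; omega

lemma tzword_length (z : ℤ) : ((tzword z).length : ℤ) = |z| := by
  rw [tzword, abs_eq_max_neg]
  split <;> simp only [padT, padTi, List.length_replicate] <;> omega

noncomputable def walkR : ℤ → List ℤ → List (Lamp 2)
  | _, [] => []
  | cur, p :: L => padT (p - cur - 1).toNat ++ ((lt 2 * la 2) :: walkR p L)

@[simp] lemma walkR_nil (cur : ℤ) : walkR cur [] = [] := rfl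
lemma walkR_cons (cur p : ℤ) (L : List ℤ) :
    walkR cur (p :: L) = padT (p - cur - 1).toNat ++ ((lt 2 * la 2) :: walkR p L) := rfl

noncomputable def walkL : ℤ → List ℤ → List (Lamp 2)
  | _, [] => []
  | cur, p :: L => padTi (cur - p).toNat ++ ((lt 2 * la 2)⁻¹ :: walkL (p - 1) L)

@[simp] lemma walkL_nil (cur : ℤ) : walkL cur [] = [] := rfl
lemma walkL_cons (cur p : ℤ) (L : List ℤ) :
    walkL cur (p :: L) = padTi (cur - p).toNat ++ ((lt 2 * la 2)⁻¹ :: walkL (p - 1) L) := rfl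

lemma getLast?_getD_cons (p d : ℤ) (L : List ℤ) :
    ((p :: L).getLast?).getD d = (L.getLast?).getD p := by
  cases L with
  | nil => rfl
  | cons q M =>
    rw [List.getLast?_cons_cons]
    cases h : (q :: M).getLast? with
    | none => simp at h
    | some y => simp

lemma walkR_prod : ∀ (L : List ℤ) (cur : ℤ), List.Chain (· < ·) cur L →
    (walkR cur L).prod = lt 2 ^ (-cur) * (L.map lampA).prod * lt 2 ^ ((L.getLast?).getD cur)
  | [], cur, _ => by
    simp only [walkR_nil, List.prod_nil, List.map_nil, mul_one, List.getLast?_nil, Option.getD_none]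
    group
  | p :: L, cur, h => by
    obtain ⟨hcp, hch⟩ := List.chain_cons.1 h
    rw [walkR_cons, List.prod_append, List.prod_cons, walkR_prod L p hch,
      getLast?_getD_cons, padT_prod,
      show (((p - cur - 1).toNat : ℤ)) = p - cur - 1 by omega,
      List.map_cons, List.prod_cons, lampA]
    group

lemma le_getLast?_getD : ∀ (L : List ℤ) (c : ℤ), List.Chain (· < ·) c L →
    c ≤ (L.getLast?).getD c
  | [], c, _ => le_refl c
  | p :: L, c, h => by
    obtain ⟨h1, h2⟩ := List.chain_cons.1 h
    rw [getLast?_getD_cons]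
    exact le_trans (le_of_lt h1) (le_getLast?_getD L p h2)

lemma getLast?_getD_le : ∀ (L : List ℤ) (c : ℤ), List.Chain (· > ·) c L →
    (L.getLast?).getD c ≤ c
  | [], c, _ => le_refl c
  | p :: L, c, h => by
    obtain ⟨h1, h2⟩ := List.chain_cons.1 h
    rw [getLast?_getD_cons]
    exact le_trans (getLast?_getD_le L p h2) (le_of_lt h1)

lemma walkR_length : ∀ (L : List ℤ) (cur : ℤ), List.Chain (· < ·) cur L →
    ((walkR cur L).length : ℤ) = (L.getLast?).getD cur - cur
  | [], cur, _ => by simp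
  | p :: L, cur, h => by
    obtain ⟨hcp, hch⟩ := List.chain_cons.1 h
    have he : p ≤ (L.getLast?).getD p := le_getLast?_getD L p hch
    rw [walkR_cons, List.length_append, List.length_cons]
    push_cast [padT, List.length_replicate]
    rw [walkR_length L p hch, getLast?_getD_cons]
    omega

lemma walkL_prod : ∀ (L : List ℤ) (cur : ℤ), List.Chain (· > ·) (cur + 1) L →
    (walkL cur L).prod =
      lt 2 ^ (-cur) * (L.map lampA).prod * lt 2 ^ (((L.getLast?).getD (cur + 1)) - 1)
  | [], cur, _ => by
    simp only [walkL_nil, List.prod_nil, List.map_nil, mul_one, List.getLast?_nil,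
      Option.getD_none, add_sub_cancel_right]
    group
  | p :: L, cur, h => by
    obtain ⟨hcp, hch⟩ := List.chain_cons.1 h
    have hch' : List.Chain (· > ·) ((p - 1) + 1) L := by
      rwa [sub_add_cancel]
    rw [walkL_cons, List.prod_append, List.prod_cons, walkL_prod L (p-1) hch',
      getLast?_getD_cons, padTi_prod,
      show ((((cur : ℤ) - p).toNat : ℤ)) = cur - p by omega,
      List.map_cons, List.prod_cons, lampA, sub_add_cancel, mul_inv_rev, la_inv]
    group

lemma walkL_length : ∀ (L : List ℤ) (cur : ℤ), List.Chain (· > ·) (cur + 1) L →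
    ((walkL cur L).length : ℤ) = cur - (((L.getLast?).getD (cur + 1)) - 1)
  | [], cur, _ => by simp
  | p :: L, cur, h => by
    obtain ⟨hcp, hch⟩ := List.chain_cons.1 h
    have hch' : List.Chain (· > ·) ((p - 1) + 1) L := by rwa [sub_add_cancel]
    have he : (L.getLast?).getD p ≤ p := getLast?_getD_le L p hch
    rw [walkL_cons, List.length_append, List.length_cons]
    push_cast [padTi, List.length_replicate]
    rw [walkL_length L (p - 1) hch', sub_add_cancel, getLast?_getD_cons]
    omega

lemma walkR_mem : ∀ (L : List ℤ) (cur : ℤ) (x : Lamp 2), x ∈ walkR cur L →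
    x = lt 2 ∨ x = lt 2 * la 2 ∨ x = (lt 2)⁻¹ ∨ x = (lt 2 * la 2)⁻¹
  | [], _, x, hx => by simp at hx
  | p :: L, cur, x, hx => by
    rw [walkR_cons, List.mem_append, List.mem_cons] at hx
    rcases hx with hx | hx | hx
    · exact Or.inl (List.eq_of_mem_replicate hx)
    · exact Or.inr (Or.inl hx)
    · exact walkR_mem L p x hx

lemma walkL_mem : ∀ (L : List ℤ) (cur : ℤ) (x : Lamp 2), x ∈ walkL cur L →
    x = lt 2 ∨ x = lt 2 * la 2 ∨ x = (lt 2)⁻¹ ∨ x = (lt 2 * la 2)⁻¹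
  | [], _, x, hx => by simp at hx
  | p :: L, cur, x, hx => by
    rw [walkL_cons, List.mem_append, List.mem_cons] at hx
    rcases hx with hx | hx | hx
    · exact Or.inr (Or.inr (Or.inl (List.eq_of_mem_replicate hx)))
    · exact Or.inr (Or.inr (Or.inr hx))
    · exact walkL_mem L (p-1) x hx

lemma four_to_S {x : Lamp 2}
    (h : x = lt 2 ∨ x = lt 2 * la 2 ∨ x = (lt 2)⁻¹ ∨ x = (lt 2 * la 2)⁻¹) :
    x ∈ ({lt 2, lt 2 * la 2} : Set (Lamp 2)) ∨ x⁻¹ ∈ ({lt 2, lt 2 * la 2} : Set (Lamp 2)) := by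
  rcases h with rfl | rfl | rfl | rfl
  · exact Or.inl (Set.mem_insert _ _)
  · exact Or.inl (Set.mem_insert_iff.2 (Or.inr rfl))
  · exact Or.inr (by rw [inv_inv]; exact Set.mem_insert _ _)
  · exact Or.inr (by rw [inv_inv]; exact Set.mem_insert_iff.2 (Or.inr rfl))

lemma padT_mem {n : ℕ} {x : Lamp 2} (hx : x ∈ padT n) :
    x = lt 2 ∨ x = lt 2 * la 2 ∨ x = (lt 2)⁻¹ ∨ x = (lt 2 * la 2)⁻¹ :=
  Or.inl (List.eq_of_mem_replicate hx)

lemma padTi_mem {n : ℕ} {x : Lamp 2} (hx : x ∈ padTi n) :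
    x = lt 2 ∨ x = lt 2 * la 2 ∨ x = (lt 2)⁻¹ ∨ x = (lt 2 * la 2)⁻¹ :=
  Or.inr (Or.inr (Or.inl (List.eq_of_mem_replicate hx)))

lemma tzword_mem {z : ℤ} {x : Lamp 2} (hx : x ∈ tzword z) :
    x = lt 2 ∨ x = lt 2 * la 2 ∨ x = (lt 2)⁻¹ ∨ x = (lt 2 * la 2)⁻¹ := by
  rw [tzword] at hx
  split at hx
  · exact padT_mem hx
  · exact padTi_mem hx

lemma getLast?_ofFn {n : ℕ} (f : Fin n → ℤ) (hn : n ≠ 0) :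
    (List.ofFn f).getLast? = some (f ⟨n - 1, Nat.sub_lt (Nat.pos_of_ne_zero hn) one_pos⟩) := by
  rw [List.getLast?_eq_getElem?, List.length_ofFn, List.getElem?_ofFn]
  rw [dif_pos (Nat.sub_lt (Nat.pos_of_ne_zero hn) one_pos)]

end LampWL

/-! ### The main theorem -/

open LampWL in
/-- Word length formula for `L₂` with the automata generating set `{t, ta}`: if
`w = a_{i₁} ⋯ a_{i_m} a_{−j₁} ⋯ a_{−j_l} t^r` with `0 < i₁ < ⋯ < i_m` and
`0 ≤ j₁ < ⋯ < j_l`, then `|w| = D'(w)`, where `D'(w) = i_m + |r − i_m|` if `l = 0`,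
and `D'(w) = min(2(j_l + 1) + i_m + |r − i_m|, 2 i_m + j_l + 1 + |r + j_l + 1|)`
otherwise (with `i_m` interpreted as `0` when `m = 0`). -/
theorem lamplighter_automata_wordLength_formula (m l : ℕ) (r : ℤ)
    (i : Fin m → ℤ) (j : Fin l → ℤ) (hi : StrictMono i) (hj : StrictMono j)
    (hi0 : ∀ k, 0 < i k) (hj0 : ∀ k, 0 ≤ j k) :
    letI S : Set (Lamp 2) := {lt 2, lt 2 * la 2}
    letI w := (List.ofFn fun k => lampA (i k)).prod *
      (List.ofFn fun k => lampA (-(j k))).prod * lt 2 ^ r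
    letI im : ℤ := ((List.ofFn i).getLast?).getD 0
    letI jl : ℤ := ((List.ofFn j).getLast?).getD 0
    (wordLength S w : ℤ) =
      if l = 0 then im + |r - im|
      else min (2 * (jl + 1) + im + |r - im|) (2 * im + jl + 1 + |r + jl + 1|) := by
  classical
  have e1 : (List.ofFn fun k => lampA (i k)) = (List.ofFn i).map lampA := by
    rw [List.map_ofFn]; rfl
  have e2 : (List.ofFn fun k => lampA (-(j k))) = (List.ofFn fun k => -(j k)).map lampA := by
    rw [List.map_ofFn]; rfl
  set posL : List ℤ := List.ofFn i with hposL
  set negL : List ℤ := List.ofFn (fun k => -(j k)) with hnegL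
  set A : ℤ := (posL.getLast?).getD 0 with hA
  set jlv : ℤ := ((List.ofFn j).getLast?).getD 0 with hjlv
  set B : ℤ := if l = 0 then 0 else jlv + 1 with hB
  set w : Lamp 2 := (List.ofFn fun k => lampA (i k)).prod *
      (List.ofFn fun k => lampA (-(j k))).prod * lt 2 ^ r with hw
  -- basic facts about A
  have hAfacts : 0 ≤ A ∧ (∀ k, i k ≤ A) ∧ (m ≠ 0 → A ∈ posL) := by
    by_cases hm : m = 0
    · subst hm
      have : posL = [] := by rw [hposL]; exact List.ofFn_zero
      refine ⟨by rw [hA, this]; norm_num, fun k => k.elim0, fun h => absurd rfl h⟩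
    · have hlast := getLast?_ofFn i hm
      have hAval : A = i ⟨m - 1, Nat.sub_lt (Nat.pos_of_ne_zero hm) one_pos⟩ := by
        rw [hA, hposL, hlast]; rfl
      refine ⟨by rw [hAval]; exact le_of_lt (hi0 _), fun k => ?_, fun _ => ?_⟩
      · rw [hAval]
        exact hi.monotone (by
          have := k.2
          simp only [Fin.le_def]
          omega)
      · rw [hAval, hposL, List.mem_ofFn]
        exact ⟨_, rfl⟩
  obtain ⟨hA0, hAub, hAmem⟩ := hAfacts
  -- basic facts about jlv
  have hjfacts : (l = 0 → jlv = 0) ∧ (l ≠ 0 → 0 ≤ jlv ∧ (∀ k, j k ≤ jlv) ∧ (-jlv) ∈ negL ∧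
      negL.getLast? = some (-jlv)) := by
    constructor
    · intro hl
      have : List.ofFn j = [] := List.eq_nil_of_length_eq_zero (by simp [hl])
      rw [hjlv, this]; rfl
    · intro hl
      have hlast := getLast?_ofFn j hl
      have hjval : jlv = j ⟨l - 1, Nat.sub_lt (Nat.pos_of_ne_zero hl) one_pos⟩ := by
        rw [hjlv, hlast]; rfl
      have hlastneg := getLast?_ofFn (fun k => -(j k)) hl
      refine ⟨by rw [hjval]; exact hj0 _, fun k => ?_, ?_, ?_⟩
      · rw [hjval]
        exact hj.monotone (by
          have := k.2
          simp only [Fin.le_def]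
          omega)
      · rw [hjval, hnegL, List.mem_ofFn]
        exact ⟨_, rfl⟩
      · rw [hnegL, hlastneg, hjval]
  have hB0 : 0 ≤ B := by
    rw [hB]
    split
    · exact le_refl 0
    · have := (hjfacts.2 (by assumption)).1
      omega
  -- chains
  have hchainPos : ∀ c : ℤ, c ≤ 0 → List.Chain (· < ·) c posL := by
    intro c hc
    rw [List.Chain, List.isChain_iff_pairwise, List.pairwise_cons]
    refine ⟨fun x hx => ?_, ?_⟩
    · rw [hposL, List.mem_ofFn] at hx
      obtain ⟨k, rfl⟩ := hx
      exact lt_of_le_of_lt hc (hi0 k)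
    · rw [hposL]
      exact List.pairwise_ofFn.2 fun k k' h => hi h
  have hchainNeg : ∀ c : ℤ, 1 ≤ c → List.Chain (· > ·) c negL := by
    intro c hc
    rw [List.Chain, List.isChain_iff_pairwise, List.pairwise_cons]
    refine ⟨fun x hx => ?_, ?_⟩
    · rw [hnegL, List.mem_ofFn] at hx
      obtain ⟨k, rfl⟩ := hx
      have := hj0 k
      beta_reduce
      omega
    · rw [hnegL]
      refine List.pairwise_ofFn.2 fun k k' h => ?_
      have := hj h
      show -(j k) > -(j k')
      omega
  -- nodup
  have hnodup : (posL ++ negL).Nodup := by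
    refine List.Nodup.append ?_ ?_ ?_
    · rw [hposL, List.nodup_ofFn]; exact hi.injective
    · rw [hnegL, List.nodup_ofFn]
      intro k k' hkk
      beta_reduce at hkk
      exact hj.injective (by omega)
    · intro x hx1 hx2
      rw [hposL, List.mem_ofFn] at hx1
      rw [hnegL, List.mem_ofFn] at hx2
      obtain ⟨k, rfl⟩ := hx1
      obtain ⟨k', hk'⟩ := hx2
      have h1 := hi0 k
      have h2 := hj0 k'
      beta_reduce at hk'
      omega
  -- psi of w
  set F : ℤ →₀ ZMod 2 := (((posL ++ negL).map fun p => Finsupp.single p 1).sum) with hF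
  have hpsiw : psi w = ⟨F, r⟩ := by
    rw [hw, e1, e2, map_mul, map_mul, psi_mapProd, psi_mapProd, map_zpow, psi_lt, tE_zpow, hF,
      List.map_append, List.sum_append, mk_mul, mk_mul]
    refine LL.ext ?_ ?_
    · simp
    · simp
  have hsupp : F.support = (posL ++ negL).toFinset := by
    rw [hF]; exact supp_sum _ hnodup
  have hAf : (Af F : ℤ) = A := by
    refine le_antisymm (Af_le hA0 ?_) ?_
    · intro x hx
      rw [hsupp, List.mem_toFinset, List.mem_append] at hx
      rcases hx with hx | hx
      · rw [hposL, List.mem_ofFn] at hx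
        obtain ⟨k, rfl⟩ := hx
        exact hAub k
      · rw [hnegL, List.mem_ofFn] at hx
        obtain ⟨k, rfl⟩ := hx
        have := hj0 k
        beta_reduce
        omega
    · by_cases hm : m = 0
      · have : posL = [] := by rw [hposL]; subst hm; exact List.ofFn_zero
        rw [hA, this]
        simp only [List.getLast?_nil, Option.getD_none]
        exact Int.natCast_nonneg _
      · apply le_Af
        rw [hsupp, List.mem_toFinset, List.mem_append]
        exact Or.inl (hAmem hm)
  have hBf : (Bf F : ℤ) = B := by
    refine le_antisymm (Bf_le hB0 ?_) ?_
    · intro x hx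
      rw [hsupp, List.mem_toFinset, List.mem_append] at hx
      rcases hx with hx | hx
      · rw [hposL, List.mem_ofFn] at hx
        obtain ⟨k, rfl⟩ := hx
        have := hi0 k
        omega
      · rw [hnegL, List.mem_ofFn] at hx
        obtain ⟨k, rfl⟩ := hx
        by_cases hl : l = 0
        · exact absurd k.2 (by omega)
        · have := (hjfacts.2 hl).2.1 k
          rw [hB, if_neg hl]
          beta_reduce
          omega
    · by_cases hl : l = 0
      · rw [hB, if_pos hl]
        exact Int.natCast_nonneg _
      · have hmem := (hjfacts.2 hl).2.2.1
        have := le_Bf (f := F) (x := -jlv) (by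
          rw [hsupp, List.mem_toFinset, List.mem_append]
          exact Or.inr hmem)
        rw [hB, if_neg hl]
        omega
  -- endpoints
  set eW : ℤ := (negL.getLast?).getD (A + 1) - 1 with heW
  set e2w : ℤ := (posL.getLast?).getD (-B) with he2w
  have heWnn : 0 ≤ eW + B := by
    by_cases hl : l = 0
    · have : negL = [] := by
        rw [hnegL]
        exact List.eq_nil_of_length_eq_zero (by simp [hl])
      rw [heW, this, hB, if_pos hl]
      simp only [List.getLast?_nil, Option.getD_none]
      omega
    · rw [heW, (hjfacts.2 hl).2.2.2, hB, if_neg hl]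
      simp only [Option.getD_some]
      omega
  have heL : ((negL.getLast?).getD (0 + 1)) - 1 = -B := by
    by_cases hl : l = 0
    · have : negL = [] := by
        rw [hnegL]
        exact List.eq_nil_of_length_eq_zero (by simp [hl])
      rw [this, hB, if_pos hl]
      simp
    · rw [(hjfacts.2 hl).2.2.2, hB, if_neg hl]
      simp only [Option.getD_some]
      omega
  have he2nn : 0 ≤ A - e2w := by
    by_cases hm : m = 0
    · have : posL = [] := by rw [hposL]; subst hm; exact List.ofFn_zero
      rw [he2w, this]
      simp only [List.getLast?_nil, Option.getD_none]
      omega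
    · have : e2w = A := by
        rw [he2w, hA]
        cases hp : posL.getLast? with
        | none =>
          exfalso
          have hh := hAmem hm
          rw [List.getLast?_eq_none_iff.1 hp] at hh
          simp at hh
        | some y => rfl
      omega
  -- the two geodesic words
  set W1 : List (Lamp 2) :=
    walkR 0 posL ++ (walkL A negL ++ (padTi (eW + B).toNat ++ tzword (r + B))) with hW1
  set W2 : List (Lamp 2) :=
    walkL 0 negL ++ (walkR (-B) posL ++ (padT (A - e2w).toNat ++ tzword (r - A))) with hW2
  have hchain1 := hchainPos 0 le_rfl
  have hchain2 := hchainNeg (A + 1) (by omega)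
  have hchain3 := hchainNeg (0 + 1) (by omega)
  have hchain4 := hchainPos (-B) (by omega)
  have hprod1 : W1.prod = w := by
    rw [hW1, List.prod_append, List.prod_append, List.prod_append,
      walkR_prod posL 0 hchain1, walkL_prod negL A hchain2,
      padTi_prod, tzword_prod, ← hA, ← heW,
      show (((eW + B).toNat : ℤ)) = eW + B from by omega, hw, e1, e2]
    group
  have hprod2 : W2.prod = w := by
    rw [hW2, List.prod_append, List.prod_append, List.prod_append,
      walkL_prod negL 0 hchain3, walkR_prod posL (-B) hchain4,
      padT_prod, tzword_prod, heL, ← he2w,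
      show (((A - e2w).toNat : ℤ)) = A - e2w from by omega, hw, e1, e2]
    have hcm := (commA_prods negL posL).eq
    calc lt 2 ^ (-0 : ℤ) * ((negL.map lampA).prod) * lt 2 ^ (-B) *
          (lt 2 ^ (-(-B)) * ((posL.map lampA).prod) * lt 2 ^ e2w *
            (lt 2 ^ (A - e2w) * lt 2 ^ (r - A)))
        = ((negL.map lampA).prod) * ((posL.map lampA).prod) * lt 2 ^ r := by group
      _ = (posL.map lampA).prod * (negL.map lampA).prod * lt 2 ^ r := by rw [hcm]
  have hlen1 : (W1.length : ℤ) = 2 * A + B + |r + B| := by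
    rw [hW1]
    simp only [List.length_append]
    push_cast
    rw [walkR_length posL 0 hchain1, walkL_length negL A hchain2, tzword_length]
    simp only [padTi, List.length_replicate]
    rw [← hA, ← heW, show (((eW + B).toNat : ℤ)) = eW + B from by omega]
    ring
  have hlen2 : (W2.length : ℤ) = 2 * B + A + |r - A| := by
    rw [hW2]
    simp only [List.length_append]
    push_cast
    rw [walkL_length negL 0 hchain3, walkR_length posL (-B) hchain4, tzword_length, heL,
      ← he2w]
    simp only [padT, List.length_replicate]
    rw [show (((A - e2w).toNat : ℤ)) = A - e2w from by omega]
    ring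
  have hmem1 : ∀ x ∈ W1, x ∈ ({lt 2, lt 2 * la 2} : Set (Lamp 2)) ∨
      x⁻¹ ∈ ({lt 2, lt 2 * la 2} : Set (Lamp 2)) := by
    intro x hx
    rw [hW1] at hx
    simp only [List.mem_append] at hx
    apply four_to_S
    rcases hx with hx | hx | hx | hx
    · exact walkR_mem posL 0 x hx
    · exact walkL_mem negL A x hx
    · exact padTi_mem hx
    · exact tzword_mem hx
  have hmem2 : ∀ x ∈ W2, x ∈ ({lt 2, lt 2 * la 2} : Set (Lamp 2)) ∨
      x⁻¹ ∈ ({lt 2, lt 2 * la 2} : Set (Lamp 2)) := by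
    intro x hx
    rw [hW2] at hx
    simp only [List.mem_append] at hx
    apply four_to_S
    rcases hx with hx | hx | hx | hx
    · exact walkL_mem negL 0 x hx
    · exact walkR_mem posL (-B) x hx
    · exact padT_mem hx
    · exact tzword_mem hx
  -- conclude
  have hn1 : W1.length ∈ {n | ∃ L : List (Lamp 2),
      (∀ x ∈ L, x ∈ ({lt 2, lt 2 * la 2} : Set (Lamp 2)) ∨
        x⁻¹ ∈ ({lt 2, lt 2 * la 2} : Set (Lamp 2))) ∧ L.length = n ∧ L.prod = w} :=
    ⟨W1, hmem1, rfl, hprod1⟩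
  have hn2 : W2.length ∈ {n | ∃ L : List (Lamp 2),
      (∀ x ∈ L, x ∈ ({lt 2, lt 2 * la 2} : Set (Lamp 2)) ∨
        x⁻¹ ∈ ({lt 2, lt 2 * la 2} : Set (Lamp 2))) ∧ L.length = n ∧ L.prod = w} :=
    ⟨W2, hmem2, rfl, hprod2⟩
  have hub1 : wordLength {lt 2, lt 2 * la 2} w ≤ W1.length := Nat.sInf_le hn1
  have hub2 : wordLength {lt 2, lt 2 * la 2} w ≤ W2.length := Nat.sInf_le hn2
  have hmemInf := Nat.sInf_mem (⟨W1.length, hn1⟩ : Set.Nonempty {n | ∃ L : List (Lamp 2),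
      (∀ x ∈ L, x ∈ ({lt 2, lt 2 * la 2} : Set (Lamp 2)) ∨
        x⁻¹ ∈ ({lt 2, lt 2 * la 2} : Set (Lamp 2))) ∧ L.length = n ∧ L.prod = w})
  obtain ⟨L, hLmem, hLlen, hLprod⟩ := hmemInf
  have hlb := phi_list L hLmem
  rw [hLprod, hpsiw, phi_mk, hAf, hBf, hLlen] at hlb
  have hD : (wordLength {lt 2, lt 2 * la 2} w : ℤ) =
      min (2 * B + A + |r - A|) (2 * A + B + |r + B|) := by
    refine le_antisymm (le_min ?_ ?_) hlb
    · calc (wordLength {lt 2, lt 2 * la 2} w : ℤ) ≤ (W2.length : ℤ) := by exact_mod_cast hub2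
        _ = _ := hlen2
    · calc (wordLength {lt 2, lt 2 * la 2} w : ℤ) ≤ (W1.length : ℤ) := by exact_mod_cast hub1
        _ = _ := hlen1
  rw [hD]
  by_cases hl : l = 0
  · rw [if_pos hl]
    have hB0' : B = 0 := by rw [hB, if_pos hl]
    rw [hB0']
    simp only [abs_eq_max_neg]
    omega
  · rw [if_neg hl]
    have hBv : B = jlv + 1 := by rw [hB, if_neg hl]
    rw [hBv]
    simp only [abs_eq_max_neg]
    omega
end
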